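/- arXiv:1712.01716 — 12 statements merged into one kernel-verified Lean document; each statement's English description precedes it below -/
import Mathlib

section
/- Suppose c ∈ ℝ^m_{>0} is a complex balanced equilibrium of a reaction network with rate constants κ_k. Let θ_i : ℤ → ℝ_{≥0} (i = 1,…,m) satisfy θ_i(x) = 0 for x ≤ 0 and θ_i(j) > 0 for all integers j ≥ 1, and let λ_k be the associated general intensity functions. Then the product-form measure π_c is a stationary measure for the stochastic model: for every x ∈ ℤ^m_{≥0}, ∑_{k=1}^K π_c(x − y_k' + y_k) λ_k(x − y_k' + y_k) = π_c(x) ∑_{k=1}^K λ_k(x). -/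
open Finset Filter

/-- General (non-mass action) intensity function:
`λ_k(x) = κ_k ∏_i ∏_{j=0}^{y_{ki}-1} θ_i(x_i - j)`. -/
noncomputable def genIntensity (m K : ℕ) (y : Fin K → Fin m → ℕ) (κ : Fin K → ℝ)
    (θ : Fin m → ℤ → ℝ) (k : Fin K) (x : Fin m → ℤ) : ℝ :=
  κ k * ∏ i, ∏ j ∈ Finset.range (y k i), θ i (x i - j)

/-- Product-form measure `π_c(x) = ∏_i c_i^{x_i} / ∏_{j=1}^{x_i} θ_i(j)`,
extended by `0` outside `ℤ^m_{≥0}`. -/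
noncomputable def prodForm (m : ℕ) (c : Fin m → ℝ) (θ : Fin m → ℤ → ℝ)
    (x : Fin m → ℤ) : ℝ :=
  if ∀ i, 0 ≤ x i then
    ∏ i, (c i ^ (x i).toNat / ∏ j ∈ Finset.range (x i).toNat, θ i (j + 1))
  else 0

/-- `c` is a complex balanced equilibrium: for each complex `z`,
`∑_{k : y_k' = z} κ_k c^{y_k} = ∑_{k : y_k = z} κ_k c^{y_k}`. -/
def complexBalanced (m K : ℕ) (y y' : Fin K → Fin m → ℕ) (κ : Fin K → ℝ)
    (c : Fin m → ℝ) : Prop :=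
  ∀ z : Fin m → ℕ, ((∃ k, y k = z) ∨ (∃ k, y' k = z)) →
    ∑ k ∈ Finset.univ.filter (fun k => y' k = z), κ k * ∏ i, c i ^ y k i =
    ∑ k ∈ Finset.univ.filter (fun k => y k = z), κ k * ∏ i, c i ^ y k i

/-- The stationarity equation:
`∑_k μ(x - y_k' + y_k) λ_k(x - y_k' + y_k) = μ(x) ∑_k λ_k(x)` for all `x ∈ ℤ^m_{≥0}`. -/
def stationaryEq (m K : ℕ) (y y' : Fin K → Fin m → ℕ)
    (μ : (Fin m → ℤ) → ℝ) (lam : Fin K → (Fin m → ℤ) → ℝ) : Prop :=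
  ∀ x : Fin m → ℕ,
    ∑ k : Fin K, μ (fun i => (x i : ℤ) - y' k i + y k i) *
        lam k (fun i => (x i : ℤ) - y' k i + y k i)
      = μ (fun i => (x i : ℤ)) * ∑ k : Fin K, lam k (fun i => (x i : ℤ))

private lemma key1 (c : ℝ) (θ : ℤ → ℝ) (hθpos : ∀ j : ℤ, 1 ≤ j → 0 < θ j)
    (n : ℕ) (a : ℤ) (h : (n : ℤ) ≤ a) :
    (c ^ a.toNat / ∏ j ∈ Finset.range a.toNat, θ (j + 1)) * ∏ j ∈ Finset.range n, θ (a - j)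
      = c ^ n * (c ^ (a - n).toNat / ∏ j ∈ Finset.range (a - n).toNat, θ (j + 1)) := by
  set p := (a - n).toNat with hpdef
  have hp : (p : ℤ) = a - n := Int.toNat_of_nonneg (sub_nonneg.2 h)
  have ha : a.toNat = p + n := by omega
  have h1 : ∏ j ∈ Finset.range n, θ (a - j) = ∏ j ∈ Finset.range n, θ ((p + j : ℕ) + 1) := by
    rw [← Finset.prod_range_reflect]
    refine Finset.prod_congr rfl fun j hj => ?_
    simp only [Finset.mem_range] at hj
    congr 1
    push_cast
    omega
  rw [h1, ha, Finset.prod_range_add, pow_add]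
  have hne1 : (∏ j ∈ Finset.range p, θ ((j : ℤ) + 1)) ≠ 0 :=
    Finset.prod_ne_zero_iff.2 fun j _ => (hθpos _ (by omega)).ne'
  have hne2 : (∏ j ∈ Finset.range n, θ (((p + j : ℕ) : ℤ) + 1)) ≠ 0 :=
    Finset.prod_ne_zero_iff.2 fun j _ => (hθpos _ (by push_cast; omega)).ne'
  rw [div_mul_eq_mul_div, mul_div_mul_right _ _ hne2]; ring

lemma key (m K : ℕ) (y : Fin K → Fin m → ℕ) (κ : Fin K → ℝ)
    (c : Fin m → ℝ) (θ : Fin m → ℤ → ℝ)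
    (hθ0 : ∀ i, ∀ x : ℤ, x ≤ 0 → θ i x = 0)
    (hθpos : ∀ i, ∀ j : ℤ, 1 ≤ j → 0 < θ i j)
    (k : Fin K) (z : Fin m → ℤ) :
    prodForm m c θ z * genIntensity m K y κ θ k z
      = κ k * (∏ i, c i ^ y k i) * prodForm m c θ (fun i => z i - y k i) := by
  by_cases h : ∀ i, (y k i : ℤ) ≤ z i
  · have hz : ∀ i, 0 ≤ z i := fun i => le_trans (Int.ofNat_nonneg _) (h i)
    have hz' : ∀ i, 0 ≤ z i - y k i := fun i => sub_nonneg.2 (h i)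
    rw [prodForm, if_pos hz, genIntensity, prodForm, if_pos hz']
    have hprod : ∏ i, ((c i ^ (z i).toNat / ∏ j ∈ Finset.range (z i).toNat, θ i (j + 1)) *
          ∏ j ∈ Finset.range (y k i), θ i (z i - j))
        = ∏ i, (c i ^ y k i *
          (c i ^ (z i - y k i).toNat / ∏ j ∈ Finset.range (z i - y k i).toNat, θ i (j + 1))) :=
      Finset.prod_congr rfl fun i _ => key1 (c i) (θ i) (hθpos i) (y k i) (z i) (h i)
    rw [Finset.prod_mul_distrib, Finset.prod_mul_distrib] at hprod
    linear_combination (κ k) * hprod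
  · push_neg at h
    obtain ⟨i0, hi0⟩ := h
    have hr : prodForm m c θ (fun i => z i - y k i) = 0 := by
      rw [prodForm, if_neg]
      push_neg
      exact ⟨i0, by omega⟩
    rw [hr, mul_zero]
    by_cases hz : ∀ i, 0 ≤ z i
    · have hg : genIntensity m K y κ θ k z = 0 := by
        rw [genIntensity]
        apply mul_eq_zero_of_right
        apply Finset.prod_eq_zero (Finset.mem_univ i0)
        refine Finset.prod_eq_zero (i := (z i0).toNat) ?_ ?_
        · rw [Finset.mem_range]
          have := hz i0
          omega
        · rw [show z i0 - ((z i0).toNat : ℤ) = 0 by have := hz i0; omega]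
          exact hθ0 i0 0 le_rfl
      rw [hg, mul_zero]
    · rw [prodForm, if_neg hz, zero_mul]

/-- If `c` is a complex balanced equilibrium of the network, then the
product-form measure `π_c` is a stationary measure for the stochastic model with
general intensity functions built from `θ`. -/
theorem stmt0 (m K : ℕ) (y y' : Fin K → Fin m → ℕ) (κ : Fin K → ℝ)
    (c : Fin m → ℝ) (θ : Fin m → ℤ → ℝ)
    (hyy' : ∀ k, y k ≠ y' k) (hκ : ∀ k, 0 < κ k) (hc : ∀ i, 0 < c i)
    (hθnn : ∀ i x, 0 ≤ θ i x)
    (hθ0 : ∀ i, ∀ x : ℤ, x ≤ 0 → θ i x = 0)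
    (hθpos : ∀ i, ∀ j : ℤ, 1 ≤ j → 0 < θ i j)
    (hcb : complexBalanced m K y y' κ c) :
    stationaryEq m K y y' (prodForm m c θ) (genIntensity m K y κ θ) := by
  classical
  intro x
  have hL : ∀ k : Fin K,
      prodForm m c θ (fun i => (x i : ℤ) - y' k i + y k i) *
        genIntensity m K y κ θ k (fun i => (x i : ℤ) - y' k i + y k i)
      = κ k * (∏ i, c i ^ y k i) * prodForm m c θ (fun i => (x i : ℤ) - y' k i) := by
    intro k
    rw [key m K y κ c θ hθ0 hθpos k]
    exact congrArg _ (congrArg _ (funext fun i => by ring))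
  have hR : ∀ k : Fin K,
      prodForm m c θ (fun i => (x i : ℤ)) * genIntensity m K y κ θ k (fun i => (x i : ℤ))
      = κ k * (∏ i, c i ^ y k i) * prodForm m c θ (fun i => (x i : ℤ) - y k i) :=
    fun k => key m K y κ c θ hθ0 hθpos k _
  set T : Finset (Fin m → ℕ) := Finset.univ.image y ∪ Finset.univ.image y' with hT
  have hTmem : ∀ z ∈ T, (∃ k, y k = z) ∨ (∃ k, y' k = z) := by
    intro z hz
    simpa [hT, Finset.mem_union, Finset.mem_image] using hz
  have hmapL : ∀ k ∈ (Finset.univ : Finset (Fin K)), y' k ∈ T :=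
    fun k _ => Finset.mem_union_right _ (Finset.mem_image_of_mem _ (Finset.mem_univ k))
  have hmapR : ∀ k ∈ (Finset.univ : Finset (Fin K)), y k ∈ T :=
    fun k _ => Finset.mem_union_left _ (Finset.mem_image_of_mem _ (Finset.mem_univ k))
  calc ∑ k : Fin K, prodForm m c θ (fun i => (x i : ℤ) - y' k i + y k i) *
        genIntensity m K y κ θ k (fun i => (x i : ℤ) - y' k i + y k i)
      = ∑ k : Fin K, κ k * (∏ i, c i ^ y k i) * prodForm m c θ (fun i => (x i : ℤ) - y' k i) :=
        Finset.sum_congr rfl fun k _ => hL k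
    _ = ∑ z ∈ T, ∑ k ∈ Finset.univ.filter (fun k => y' k = z),
          κ k * (∏ i, c i ^ y k i) * prodForm m c θ (fun i => (x i : ℤ) - y' k i) :=
        (Finset.sum_fiberwise_of_maps_to hmapL _).symm
    _ = ∑ z ∈ T, (∑ k ∈ Finset.univ.filter (fun k => y' k = z), κ k * ∏ i, c i ^ y k i) *
          prodForm m c θ (fun i => (x i : ℤ) - z i) := by
        refine Finset.sum_congr rfl fun z hz => ?_
        rw [Finset.sum_mul]
        refine Finset.sum_congr rfl fun k hk => ?_
        have hk' : y' k = z := by simpa using hk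
        rw [hk']
    _ = ∑ z ∈ T, (∑ k ∈ Finset.univ.filter (fun k => y k = z), κ k * ∏ i, c i ^ y k i) *
          prodForm m c θ (fun i => (x i : ℤ) - z i) := by
        refine Finset.sum_congr rfl fun z hz => ?_
        rw [hcb z (hTmem z hz)]
    _ = ∑ z ∈ T, ∑ k ∈ Finset.univ.filter (fun k => y k = z),
          κ k * (∏ i, c i ^ y k i) * prodForm m c θ (fun i => (x i : ℤ) - y k i) := by
        refine Finset.sum_congr rfl fun z hz => ?_
        rw [Finset.sum_mul]
        refine Finset.sum_congr rfl fun k hk => ?_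
        have hk' : y k = z := by simpa using hk
        rw [hk']
    _ = ∑ k : Fin K, κ k * (∏ i, c i ^ y k i) * prodForm m c θ (fun i => (x i : ℤ) - y k i) :=
        Finset.sum_fiberwise_of_maps_to hmapR _
    _ = ∑ k : Fin K, prodForm m c θ (fun i => (x i : ℤ)) *
          genIntensity m K y κ θ k (fun i => (x i : ℤ)) :=
        Finset.sum_congr rfl fun k _ => (hR k).symm
    _ = prodForm m c θ (fun i => (x i : ℤ)) *
          ∑ k : Fin K, genIntensity m K y κ θ k (fun i => (x i : ℤ)) :=
        (Finset.mul_sum _ _ _).symm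
end

section
/- Suppose c ∈ ℝ^m_{>0} is a complex balanced equilibrium of a reaction network with rate constants κ_k. Then the product of Poisson distributions π(x) = ∏_{i=1}^m e^{−c_i} c_i^{x_i}/x_i! (for x ∈ ℤ^m_{≥0}, extended by 0 outside ℤ^m_{≥0}) is a stationary distribution for the stochastic mass action model: for every x ∈ ℤ^m_{≥0}, ∑_{k=1}^K π(x − y_k' + y_k) λ_k(x − y_k' + y_k) = π(x) ∑_{k=1}^K λ_k(x), and ∑_{x ∈ ℤ^m_{≥0}} π(x) = 1. -/
open Finset Filter

/-- Stochastic mass action intensity: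
`λ_k(x) = κ_k ∏_i x_i!/(x_i - y_{ki})!` when `x_i ≥ y_{ki}` for all `i`, else `0`. -/
noncomputable def maIntensity (m K : ℕ) (y : Fin K → Fin m → ℕ) (κ : Fin K → ℝ)
    (k : Fin K) (x : Fin m → ℤ) : ℝ :=
  if ∀ i, (y k i : ℤ) ≤ x i then
    κ k * ∏ i, ((x i).toNat.factorial : ℝ) / (((x i).toNat - y k i).factorial : ℝ)
  else 0

/-- Product of Poisson distributions with parameter vector `c`, extended by `0`
outside `ℤ^m_{≥0}`. -/
noncomputable def poissonPi (m : ℕ) (c : Fin m → ℝ) (x : Fin m → ℤ) : ℝ :=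
  if ∀ i, 0 ≤ x i then
    ∏ i, Real.exp (-c i) * c i ^ (x i).toNat / ((x i).toNat.factorial : ℝ)
  else 0

private lemma factor_eq (r : ℝ) (a b : ℕ) :
    Real.exp (-r) * r ^ (a + b) / (((a + b).factorial : ℕ) : ℝ) *
      ((((a + b).factorial : ℕ) : ℝ) / ((a.factorial : ℕ) : ℝ)) =
    r ^ b * (Real.exp (-r) * r ^ a / ((a.factorial : ℕ) : ℝ)) := by
  have h1 : (((a + b).factorial : ℕ) : ℝ) ≠ 0 := Nat.cast_ne_zero.2 (Nat.factorial_ne_zero _)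
  have h2 : ((a.factorial : ℕ) : ℝ) ≠ 0 := Nat.cast_ne_zero.2 (Nat.factorial_ne_zero _)
  field_simp
  rw [pow_add]
  ring

private lemma factor_eq' (r : ℝ) (a b : ℕ) (hba : b ≤ a) :
    Real.exp (-r) * r ^ a / ((a.factorial : ℕ) : ℝ) *
      (((a.factorial : ℕ) : ℝ) / (((a - b).factorial : ℕ) : ℝ)) =
    r ^ b * (Real.exp (-r) * r ^ (a - b) / (((a - b).factorial : ℕ) : ℝ)) := by
  obtain ⟨d, rfl⟩ : ∃ d, a = d + b := ⟨a - b, by omega⟩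
  simp only [Nat.add_sub_cancel]
  exact factor_eq r d b

private lemma regroup (m K : ℕ) (y y' : Fin K → Fin m → ℕ) (κ : Fin K → ℝ) (c : Fin m → ℝ)
    (hcb : complexBalanced m K y y' κ c) (Φ : (Fin m → ℕ) → ℝ) :
    ∑ k : Fin K, (κ k * ∏ i, c i ^ y k i) * Φ (y' k) =
    ∑ k : Fin K, (κ k * ∏ i, c i ^ y k i) * Φ (y k) := by
  classical
  set S : Finset (Fin m → ℕ) := Finset.univ.image y ∪ Finset.univ.image y' with hS
  have h1 : ∑ k : Fin K, (κ k * ∏ i, c i ^ y k i) * Φ (y' k)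
      = ∑ z ∈ S, ∑ k ∈ Finset.univ.filter (fun k => y' k = z),
          (κ k * ∏ i, c i ^ y k i) * Φ (y' k) :=
    (Finset.sum_fiberwise_of_maps_to
      (fun k _ => Finset.mem_union_right _ (Finset.mem_image_of_mem _ (Finset.mem_univ k))) _).symm
  have h2 : ∑ k : Fin K, (κ k * ∏ i, c i ^ y k i) * Φ (y k)
      = ∑ z ∈ S, ∑ k ∈ Finset.univ.filter (fun k => y k = z),
          (κ k * ∏ i, c i ^ y k i) * Φ (y k) :=
    (Finset.sum_fiberwise_of_maps_to
      (fun k _ => Finset.mem_union_left _ (Finset.mem_image_of_mem _ (Finset.mem_univ k))) _).symm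
  rw [h1, h2]
  refine Finset.sum_congr rfl fun z hz => ?_
  have hz' : (∃ k, y k = z) ∨ (∃ k, y' k = z) := by
    simp only [hS, Finset.mem_union, Finset.mem_image, Finset.mem_univ, true_and] at hz
    tauto
  have key := hcb z hz'
  calc ∑ k ∈ Finset.univ.filter (fun k => y' k = z), (κ k * ∏ i, c i ^ y k i) * Φ (y' k)
      = (∑ k ∈ Finset.univ.filter (fun k => y' k = z), κ k * ∏ i, c i ^ y k i) * Φ z := by
        rw [Finset.sum_mul]
        exact Finset.sum_congr rfl fun k hk => by rw [(Finset.mem_filter.1 hk).2]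
    _ = (∑ k ∈ Finset.univ.filter (fun k => y k = z), κ k * ∏ i, c i ^ y k i) * Φ z := by
        rw [key]
    _ = ∑ k ∈ Finset.univ.filter (fun k => y k = z), (κ k * ∏ i, c i ^ y k i) * Φ (y k) := by
        rw [Finset.sum_mul]
        exact Finset.sum_congr rfl fun k hk => by rw [(Finset.mem_filter.1 hk).2]

private lemma termA (m K : ℕ) (y y' : Fin K → Fin m → ℕ) (κ : Fin K → ℝ) (c : Fin m → ℝ)
    (x : Fin m → ℕ) (k : Fin K) :
    poissonPi m c (fun i => (x i : ℤ) - y' k i + y k i) *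
      maIntensity m K y κ k (fun i => (x i : ℤ) - y' k i + y k i) =
    (κ k * ∏ i, c i ^ y k i) *
      (if ∀ i, y' k i ≤ x i then
        ∏ i, Real.exp (-c i) * c i ^ (x i - y' k i) / (((x i - y' k i).factorial : ℕ) : ℝ)
      else 0) := by
  by_cases h : ∀ i, y' k i ≤ x i
  · have h0 : ∀ i, (0:ℤ) ≤ (x i : ℤ) - y' k i + y k i := fun i => by have := h i; omega
    have h1 : ∀ i, (y k i : ℤ) ≤ (x i : ℤ) - y' k i + y k i := fun i => by have := h i; omega
    have hT : ∀ i, ((x i : ℤ) - y' k i + y k i).toNat = (x i - y' k i) + y k i := fun i => by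
      have := h i; omega
    rw [poissonPi, maIntensity, if_pos h0, if_pos h1, if_pos h]
    simp only [hT, Nat.add_sub_cancel]
    rw [mul_left_comm, ← Finset.prod_mul_distrib]
    rw [Finset.prod_congr rfl (fun i _ => factor_eq (c i) (x i - y' k i) (y k i)),
        Finset.prod_mul_distrib, ← mul_assoc]
  · rw [if_neg h, mul_zero]
    obtain ⟨i₀, hi₀⟩ := not_forall.1 h
    have hneg : ¬ ∀ i, (y k i : ℤ) ≤ (x i : ℤ) - y' k i + y k i := by
      push_neg at hi₀ ⊢
      exact ⟨i₀, by omega⟩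
    rw [maIntensity, if_neg hneg, mul_zero]

private lemma termB (m K : ℕ) (y : Fin K → Fin m → ℕ) (κ : Fin K → ℝ) (c : Fin m → ℝ)
    (x : Fin m → ℕ) (k : Fin K) :
    poissonPi m c (fun i => (x i : ℤ)) * maIntensity m K y κ k (fun i => (x i : ℤ)) =
    (κ k * ∏ i, c i ^ y k i) *
      (if ∀ i, y k i ≤ x i then
        ∏ i, Real.exp (-c i) * c i ^ (x i - y k i) / (((x i - y k i).factorial : ℕ) : ℝ)
      else 0) := by
  by_cases h : ∀ i, y k i ≤ x i
  · have h0 : ∀ i, (0:ℤ) ≤ (x i : ℤ) := fun i => Int.natCast_nonneg _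
    have h1 : ∀ i, (y k i : ℤ) ≤ ((x i : ℕ) : ℤ) := fun i => by exact_mod_cast h i
    rw [poissonPi, maIntensity, if_pos h0, if_pos h1, if_pos h]
    simp only [Int.toNat_natCast]
    rw [mul_left_comm, ← Finset.prod_mul_distrib]
    rw [Finset.prod_congr rfl (fun i _ => factor_eq' (c i) (x i) (y k i) (h i)),
        Finset.prod_mul_distrib, ← mul_assoc]
  · rw [if_neg h, mul_zero]
    have hneg : ¬ ∀ i, (y k i : ℤ) ≤ (x i : ℤ) := by
      push_neg at h ⊢
      obtain ⟨i₀, hi₀⟩ := h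
      exact ⟨i₀, by exact_mod_cast hi₀⟩
    rw [maIntensity, if_neg hneg, mul_zero]

private lemma aux_mul (n : ℕ) (a : ℕ → ℝ) (G : (Fin n → ℕ) → ℝ)
    (ha : HasSum a 1) (hG : HasSum G 1) (ha0 : 0 ≤ a) (hG0 : 0 ≤ G)
    (g : (Fin (n+1) → ℕ) → ℝ)
    (hcompat : ∀ p : ℕ × (Fin n → ℕ), g (Fin.cons p.1 p.2) = a p.1 * G p.2) :
    HasSum g 1 := by
  rw [← Equiv.hasSum_iff (Fin.consEquiv fun _ : Fin (n+1) => ℕ)]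
  have hfun : (g ∘ (Fin.consEquiv fun _ : Fin (n+1) => ℕ)) =
      fun p : ℕ × (Fin n → ℕ) => a p.1 * G p.2 := funext fun p => hcompat p
  rw [hfun]
  simpa using ha.mul hG (ha.summable.mul_of_nonneg hG.summable ha0 hG0)

private lemma hasSum_pi_one : ∀ (n : ℕ) (f : Fin n → ℕ → ℝ), (∀ i k, 0 ≤ f i k) →
    (∀ i, HasSum (f i) 1) → HasSum (fun x : Fin n → ℕ => ∏ i, f i (x i)) 1
  | 0, f, _, _ => by
      simpa using
        hasSum_single (α := ℝ) (default : Fin 0 → ℕ)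
          (fun b hb => absurd (Subsingleton.elim b default) hb)
  | (n+1), f, h0, h1 => by
      have ih := hasSum_pi_one n (fun i => f i.succ) (fun i k => h0 _ _) (fun i => h1 _)
      exact aux_mul n (f 0) _ (h1 0) ih (fun k => h0 0 k)
        (fun x => Finset.prod_nonneg fun i _ => h0 _ _) _
        (fun p => by simp [Fin.prod_univ_succ])

/-- If `c` is a complex balanced equilibrium, then the product of
Poissons `π(x) = ∏_i e^{-c_i} c_i^{x_i}/x_i!` is a stationary distribution for the
stochastic mass action model, and it has total mass `1`. -/
theorem stmt1 (m K : ℕ) (y y' : Fin K → Fin m → ℕ) (κ : Fin K → ℝ) (c : Fin m → ℝ)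
    (hyy' : ∀ k, y k ≠ y' k) (hκ : ∀ k, 0 < κ k) (hc : ∀ i, 0 < c i)
    (hcb : complexBalanced m K y y' κ c) :
    stationaryEq m K y y' (poissonPi m c) (maIntensity m K y κ) ∧
      ∑' x : Fin m → ℕ, poissonPi m c (fun i => (x i : ℤ)) = 1 := by
  constructor
  · intro x
    classical
    have e1 : ∀ k : Fin K,
        poissonPi m c (fun i => (x i : ℤ) - y' k i + y k i) *
          maIntensity m K y κ k (fun i => (x i : ℤ) - y' k i + y k i) =
        (κ k * ∏ i, c i ^ y k i) *
          (fun z : Fin m → ℕ => if ∀ i, z i ≤ x i then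
            ∏ i, Real.exp (-c i) * c i ^ (x i - z i) / (((x i - z i).factorial : ℕ) : ℝ)
          else 0) (y' k) := fun k => termA m K y y' κ c x k
    have e2 : ∀ k : Fin K,
        poissonPi m c (fun i => (x i : ℤ)) * maIntensity m K y κ k (fun i => (x i : ℤ)) =
        (κ k * ∏ i, c i ^ y k i) *
          (fun z : Fin m → ℕ => if ∀ i, z i ≤ x i then
            ∏ i, Real.exp (-c i) * c i ^ (x i - z i) / (((x i - z i).factorial : ℕ) : ℝ)
          else 0) (y k) := fun k => termB m K y κ c x k
    calc ∑ k : Fin K, poissonPi m c (fun i => (x i : ℤ) - y' k i + y k i) *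
            maIntensity m K y κ k (fun i => (x i : ℤ) - y' k i + y k i)
        = ∑ k : Fin K, (κ k * ∏ i, c i ^ y k i) *
            (fun z : Fin m → ℕ => if ∀ i, z i ≤ x i then
              ∏ i, Real.exp (-c i) * c i ^ (x i - z i) / (((x i - z i).factorial : ℕ) : ℝ)
            else 0) (y' k) := Finset.sum_congr rfl fun k _ => e1 k
      _ = ∑ k : Fin K, (κ k * ∏ i, c i ^ y k i) *
            (fun z : Fin m → ℕ => if ∀ i, z i ≤ x i then
              ∏ i, Real.exp (-c i) * c i ^ (x i - z i) / (((x i - z i).factorial : ℕ) : ℝ)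
            else 0) (y k) := regroup m K y y' κ c hcb
            (fun z : Fin m → ℕ => if ∀ i, z i ≤ x i then
              ∏ i, Real.exp (-c i) * c i ^ (x i - z i) / (((x i - z i).factorial : ℕ) : ℝ)
            else 0)
      _ = ∑ k : Fin K, poissonPi m c (fun i => (x i : ℤ)) *
            maIntensity m K y κ k (fun i => (x i : ℤ)) :=
          (Finset.sum_congr rfl fun k _ => e2 k).symm
      _ = poissonPi m c (fun i => (x i : ℤ)) *
            ∑ k : Fin K, maIntensity m K y κ k (fun i => (x i : ℤ)) := by
          rw [Finset.mul_sum]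
  · have hfi : ∀ i, HasSum (fun n : ℕ => Real.exp (-c i) * c i ^ n / ((n.factorial : ℕ) : ℝ)) 1 := by
      intro i
      have := ProbabilityTheory.poissonPMFRealSum ⟨c i, (hc i).le⟩
      exact this
    have h0 : ∀ (i : Fin m) (n : ℕ),
        0 ≤ Real.exp (-c i) * c i ^ n / ((n.factorial : ℕ) : ℝ) := by
      intro i n
      exact div_nonneg (mul_nonneg (Real.exp_nonneg _) (pow_nonneg (hc i).le _))
        (Nat.cast_nonneg _)
    have hsum := hasSum_pi_one m _ h0 hfi
    have hval : ∀ x : Fin m → ℕ, poissonPi m c (fun i => (x i : ℤ))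
        = ∏ i, Real.exp (-c i) * c i ^ x i / (((x i).factorial : ℕ) : ℝ) := by
      intro x
      rw [poissonPi, if_pos (fun i => Int.natCast_nonneg _)]
      simp [Int.toNat_natCast]
    rw [tsum_congr hval]
    exact hsum.tsum_eq
end

section
/- Suppose c ∈ ℝ^m_{>0} is a complex balanced equilibrium of a reaction network with rate constants κ_k. Let θ_i : ℤ → ℝ_{≥0} satisfy θ_i(x) = 0 for x ≤ 0, θ_i(j) > 0 for all integers j ≥ 1, and θ_i(x) → ∞ as x → ∞. Then the product-form measure π_c is summable, i.e. Z := ∑_{x ∈ ℤ^m_{≥0}} ∏_{i=1}^m c_i^{x_i} / ∏_{j=1}^{x_i} θ_i(j) < ∞, and consequently π_c/Z is a stationary distribution for the stochastic model with the general intensity functions λ_k: it has total mass 1 and satisfies ∑_{k=1}^K (π_c/Z)(x − y_k' + y_k) λ_k(x − y_k' + y_k) = (π_c/Z)(x) ∑_{k=1}^K λ_k(x) for every x ∈ ℤ^m_{≥0}. -/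
open Finset Filter

/-- One-coordinate factor of the product-form measure, extended by 0 to negatives. -/
noncomputable def Gfac (c : ℝ) (θ : ℤ → ℝ) (v : ℤ) : ℝ :=
  if 0 ≤ v then c ^ v.toNat / ∏ j ∈ Finset.range v.toNat, θ (j + 1) else 0

lemma Gfac_step (c : ℝ) (θ : ℤ → ℝ)
    (hθ0 : ∀ x : ℤ, x ≤ 0 → θ x = 0) (hθpos : ∀ j : ℤ, 1 ≤ j → 0 < θ j) (v : ℤ) :
    Gfac c θ v * θ v = c * Gfac c θ (v - 1) := by
  rcases le_or_gt v 0 with h | h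
  · rw [hθ0 v h, mul_zero, Gfac, if_neg (by omega), mul_zero]
  · have h1 : (1:ℤ) ≤ v := h
    obtain ⟨n, rfl⟩ : ∃ n : ℕ, v = (n:ℤ) + 1 := ⟨(v-1).toNat, by omega⟩
    have ht : ((n:ℤ) + 1).toNat = n + 1 := by omega
    have ht' : ((n:ℤ) + 1 - 1).toNat = n := by omega
    rw [Gfac, if_pos (by omega), Gfac, if_pos (by omega), ht, ht',
      Finset.prod_range_succ]
    have hpos : (0:ℝ) < θ ((n:ℤ) + 1) := hθpos _ (by omega)
    have hprodpos : (0:ℝ) < ∏ j ∈ Finset.range n, θ ((j:ℤ) + 1) :=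
      Finset.prod_pos fun j _ => hθpos _ (by omega)
    field_simp
    ring

lemma Gfac_theta_prod (c : ℝ) (θ : ℤ → ℝ)
    (hθ0 : ∀ x : ℤ, x ≤ 0 → θ x = 0) (hθpos : ∀ j : ℤ, 1 ≤ j → 0 < θ j)
    (s : ℕ) : ∀ v : ℤ,
    Gfac c θ v * ∏ j ∈ Finset.range s, θ (v - j) = c ^ s * Gfac c θ (v - s) := by
  induction s with
  | zero => intro v; simp
  | succ n ih =>
    intro v
    have h1 : ∏ j ∈ Finset.range (n + 1), θ (v - j)
        = θ v * ∏ j ∈ Finset.range n, θ ((v - 1) - j) := by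
      rw [Finset.prod_range_succ', mul_comm]
      congr 1
      · norm_num
      · exact Finset.prod_congr rfl fun j _ => by congr 1; push_cast; ring
    rw [h1, ← mul_assoc, Gfac_step c θ hθ0 hθpos, mul_assoc, ih (v-1), ← mul_assoc,
      mul_comm c (c ^ n), ← pow_succ]
    congr 2
    push_cast; ring

lemma prodForm_eq_prodG (m : ℕ) (c : Fin m → ℝ) (θ : Fin m → ℤ → ℝ) (x : Fin m → ℤ) :
    prodForm m c θ x = ∏ i, Gfac (c i) (θ i) (x i) := by
  by_cases h : ∀ i, 0 ≤ x i
  · rw [prodForm, if_pos h]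
    exact Finset.prod_congr rfl fun i _ => by rw [Gfac, if_pos (h i)]
  · push_neg at h
    obtain ⟨i, hi⟩ := h
    rw [prodForm, if_neg (by push_neg; exact ⟨i, hi⟩), eq_comm]
    exact Finset.prod_eq_zero (Finset.mem_univ i) (by rw [Gfac, if_neg (not_le.mpr hi)])

/-- Key identity: `π(ξ) · ∏_i ∏_{j<z_i} θ_i(ξ_i - j) = ∏_i c_i^{z_i} G_i(ξ_i - z_i)`. -/
lemma prodForm_mul_theta (m : ℕ) (c : Fin m → ℝ) (θ : Fin m → ℤ → ℝ)
    (hθ0 : ∀ i, ∀ x : ℤ, x ≤ 0 → θ i x = 0) (hθpos : ∀ i, ∀ j : ℤ, 1 ≤ j → 0 < θ i j)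
    (x : Fin m → ℤ) (z : Fin m → ℕ) :
    prodForm m c θ x * ∏ i, ∏ j ∈ Finset.range (z i), θ i (x i - j)
      = (∏ i, c i ^ z i) * ∏ i, Gfac (c i) (θ i) (x i - z i) := by
  rw [prodForm_eq_prodG, ← Finset.prod_mul_distrib, ← Finset.prod_mul_distrib]
  exact Finset.prod_congr rfl fun i _ => Gfac_theta_prod (c i) (θ i) (hθ0 i) (hθpos i) (z i) (x i)

lemma summable_pi_prod : ∀ (m : ℕ) (f : Fin m → ℕ → ℝ), (∀ i n, 0 ≤ f i n) →
    (∀ i, Summable (f i)) → Summable (fun x : Fin m → ℕ => ∏ i, f i (x i)) := by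
  intro m
  induction m with
  | zero =>
    intro f _ _
    simp only [Finset.univ_eq_empty, Finset.prod_empty]
    exact summable_of_finite_support (Set.Finite.subset (Set.finite_univ) (by simp))
  | succ n ih =>
    intro f hnn hsum
    have hg : Summable (fun x : Fin n → ℕ => ∏ i, f i.succ (x i)) :=
      ih (fun i => f i.succ) (fun i k => hnn _ _) (fun i => hsum _)
    have h : Summable (fun p : ℕ × (Fin n → ℕ) => f 0 p.1 * ∏ i, f i.succ (p.2 i)) :=
      by
      apply Summable.mul_of_nonneg (hsum 0) hg
      · intro k; exact hnn 0 k
      · intro p; exact Finset.prod_nonneg fun i _ => hnn _ _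
    have := (Fin.consEquiv (fun _ => ℕ)).symm.summable_iff.mpr h
    convert this using 1
    funext x
    rw [Fin.prod_univ_succ]
    rfl

lemma summable_coord (c : ℝ) (θ : ℤ → ℝ) (hc : 0 < c)
    (hθpos : ∀ j : ℤ, 1 ≤ j → 0 < θ j) (hθlim : Tendsto θ atTop atTop) :
    Summable (fun n : ℕ => c ^ n / ∏ j ∈ Finset.range n, θ (j + 1)) := by
  set f : ℕ → ℝ := fun n => c ^ n / ∏ j ∈ Finset.range n, θ (j + 1) with hf
  have hppos : ∀ n : ℕ, (0:ℝ) < ∏ j ∈ Finset.range n, θ ((j:ℤ) + 1) :=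
    fun n => Finset.prod_pos fun j _ => hθpos _ (by omega)
  have hfpos : ∀ n, 0 < f n := fun n => div_pos (pow_pos hc n) (hppos n)
  have hcomp : Tendsto (fun n : ℕ => θ ((n:ℤ) + 1)) atTop atTop :=
    hθlim.comp (tendsto_atTop_add_const_right _ 1 tendsto_natCast_atTop_atTop)
  apply summable_of_ratio_norm_eventually_le (r := 1/2) (by norm_num)
  filter_upwards [hcomp.eventually_ge_atTop (2 * c)] with n hn
  have hθn : (0:ℝ) < θ ((n:ℤ) + 1) := lt_of_lt_of_le (by positivity) hn
  have hstep : f (n + 1) = f n * (c / θ ((n:ℤ) + 1)) := by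
    rw [hf]
    simp only
    rw [Finset.prod_range_succ, pow_succ]
    field_simp
  rw [Real.norm_of_nonneg (hfpos _).le, Real.norm_of_nonneg (hfpos _).le, hstep]
  have hle : c / θ ((n:ℤ) + 1) ≤ 1/2 := by
    rw [div_le_div_iff₀ hθn (by norm_num)]
    linarith
  calc f n * (c / θ ((n:ℤ) + 1)) ≤ f n * (1/2) :=
        mul_le_mul_of_nonneg_left hle (hfpos n).le
    _ = 1/2 * f n := by ring


/-- If `c` is a complex balanced equilibrium and each `θ_i → ∞`,
then the product-form measure `π_c` is summable, and the normalized measure `π_c / Z`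
is a stationary distribution (total mass one, satisfying the stationarity equation). -/
theorem stmt2 (m K : ℕ) (y y' : Fin K → Fin m → ℕ) (κ : Fin K → ℝ)
    (c : Fin m → ℝ) (θ : Fin m → ℤ → ℝ)
    (hyy' : ∀ k, y k ≠ y' k) (hκ : ∀ k, 0 < κ k) (hc : ∀ i, 0 < c i)
    (hθnn : ∀ i x, 0 ≤ θ i x)
    (hθ0 : ∀ i, ∀ x : ℤ, x ≤ 0 → θ i x = 0)
    (hθpos : ∀ i, ∀ j : ℤ, 1 ≤ j → 0 < θ i j)
    (hθlim : ∀ i, Filter.Tendsto (θ i) Filter.atTop Filter.atTop)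
    (hcb : complexBalanced m K y y' κ c) :
    Summable (fun x : Fin m → ℕ => prodForm m c θ (fun i => (x i : ℤ))) ∧
    (∑' x : Fin m → ℕ,
        prodForm m c θ (fun i => (x i : ℤ)) /
          (∑' x' : Fin m → ℕ, prodForm m c θ (fun i => (x' i : ℤ)))) = 1 ∧
    stationaryEq m K y y'
      (fun ξ => prodForm m c θ ξ /
        (∑' x' : Fin m → ℕ, prodForm m c θ (fun i => (x' i : ℤ))))
      (genIntensity m K y κ θ) := by
  set f : Fin m → ℕ → ℝ := fun i n => c i ^ n / ∏ j ∈ Finset.range n, θ i (j + 1) with hfdef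
  have hfpos : ∀ i n, 0 < f i n := fun i n =>
    div_pos (pow_pos (hc i) n) (Finset.prod_pos fun j _ => hθpos i _ (by omega))
  have hFeq : ∀ x : Fin m → ℕ, prodForm m c θ (fun i => (x i : ℤ)) = ∏ i, f i (x i) := by
    intro x
    rw [prodForm, if_pos (fun i => Int.natCast_nonneg _)]
    exact Finset.prod_congr rfl fun i _ => by rw [Int.toNat_natCast]
  have hsumm : Summable (fun x : Fin m → ℕ => prodForm m c θ (fun i => (x i : ℤ))) :=
    (summable_pi_prod m f (fun i n => (hfpos i n).le)
      (fun i => summable_coord (c i) (θ i) (hc i) (hθpos i) (hθlim i))).congr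
      fun x => (hFeq x).symm
  set Z := ∑' x' : Fin m → ℕ, prodForm m c θ (fun i => (x' i : ℤ)) with hZdef
  have hone : prodForm m c θ (fun i => ((0 : Fin m → ℕ) i : ℤ)) = 1 := by
    rw [hFeq]
    simp [hfdef]
  have hZ1 : (1:ℝ) ≤ Z := by
    rw [← hone]
    exact hsumm.le_tsum 0 fun x _ => by
      rw [hFeq]; exact Finset.prod_nonneg fun i _ => (hfpos i (x i)).le
  have hZne : Z ≠ 0 := by positivity
  refine ⟨hsumm, ?_, ?_⟩
  · rw [tsum_div_const, ← hZdef, div_self hZne]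
  · intro x
    set Φ : (Fin m → ℕ) → ℝ :=
      fun z => ∏ i, Gfac (c i) (θ i) ((x i : ℤ) - z i) with hΦ
    set g : Fin K → ℝ := fun k => κ k * ∏ i, c i ^ y k i with hg
    have keyA : ∀ k, prodForm m c θ (fun i => (x i : ℤ) - y' k i + y k i) *
        genIntensity m K y κ θ k (fun i => (x i : ℤ) - y' k i + y k i)
        = g k * Φ (y' k) := by
      intro k
      rw [genIntensity, mul_left_comm, prodForm_mul_theta m c θ hθ0 hθpos, hg, hΦ, mul_assoc]
      congr 1
      congr 1
      exact Finset.prod_congr rfl fun i _ => by congr 1; ring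
    have keyB : ∀ k, prodForm m c θ (fun i => (x i : ℤ)) *
        genIntensity m K y κ θ k (fun i => (x i : ℤ)) = g k * Φ (y k) := by
      intro k
      rw [genIntensity, mul_left_comm, prodForm_mul_theta m c θ hθ0 hθpos, hg, hΦ, mul_assoc]
    set S : Finset (Fin m → ℕ) := Finset.univ.image y ∪ Finset.univ.image y' with hS
    have hfib : ∀ w : Fin K → Fin m → ℕ, (∀ k, w k ∈ S) →
        ∑ k : Fin K, g k * Φ (w k)
          = ∑ z ∈ S, (∑ k ∈ Finset.univ.filter (fun k => w k = z), g k) * Φ z := by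
      intro w hw
      rw [← Finset.sum_fiberwise_of_maps_to (g := w) (fun k _ => hw k)
        (fun k => g k * Φ (w k))]
      refine Finset.sum_congr rfl fun z _ => ?_
      rw [Finset.sum_mul]
      exact Finset.sum_congr rfl fun k hk => by
        rw [(Finset.mem_filter.mp hk).2]
    have hunnorm : ∑ k : Fin K,
        prodForm m c θ (fun i => (x i : ℤ) - y' k i + y k i) *
          genIntensity m K y κ θ k (fun i => (x i : ℤ) - y' k i + y k i)
        = prodForm m c θ (fun i => (x i : ℤ)) *
          ∑ k : Fin K, genIntensity m K y κ θ k (fun i => (x i : ℤ)) := by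
      rw [Finset.mul_sum]
      calc ∑ k : Fin K, prodForm m c θ (fun i => (x i : ℤ) - y' k i + y k i) *
            genIntensity m K y κ θ k (fun i => (x i : ℤ) - y' k i + y k i)
          = ∑ k : Fin K, g k * Φ (y' k) := Finset.sum_congr rfl fun k _ => keyA k
        _ = ∑ z ∈ S, (∑ k ∈ Finset.univ.filter (fun k => y' k = z), g k) * Φ z :=
            hfib y' fun k => Finset.mem_union_right _ (Finset.mem_image_of_mem y' (Finset.mem_univ k))
        _ = ∑ z ∈ S, (∑ k ∈ Finset.univ.filter (fun k => y k = z), g k) * Φ z := by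
            refine Finset.sum_congr rfl fun z hz => ?_
            congr 1
            refine hcb z ?_
            rw [hS, Finset.mem_union] at hz
            rcases hz with h | h
            · obtain ⟨k, _, hk⟩ := Finset.mem_image.mp h
              exact Or.inl ⟨k, hk⟩
            · obtain ⟨k, _, hk⟩ := Finset.mem_image.mp h
              exact Or.inr ⟨k, hk⟩
        _ = ∑ k : Fin K, g k * Φ (y k) := (hfib y fun k =>
            Finset.mem_union_left _ (Finset.mem_image_of_mem y (Finset.mem_univ k))).symm
        _ = ∑ k : Fin K, prodForm m c θ (fun i => (x i : ℤ)) *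
            genIntensity m K y κ θ k (fun i => (x i : ℤ)) :=
            Finset.sum_congr rfl fun k _ => (keyB k).symm
    calc ∑ k : Fin K,
          prodForm m c θ (fun i => (x i : ℤ) - y' k i + y k i) / Z *
            genIntensity m K y κ θ k (fun i => (x i : ℤ) - y' k i + y k i)
        = (∑ k : Fin K, prodForm m c θ (fun i => (x i : ℤ) - y' k i + y k i) *
            genIntensity m K y κ θ k (fun i => (x i : ℤ) - y' k i + y k i)) / Z := by
          rw [Finset.sum_div]
          exact Finset.sum_congr rfl fun k _ => div_mul_eq_mul_div _ _ _
      _ = (prodForm m c θ (fun i => (x i : ℤ)) *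
            ∑ k : Fin K, genIntensity m K y κ θ k (fun i => (x i : ℤ))) / Z := by
          rw [hunnorm]
      _ = prodForm m c θ (fun i => (x i : ℤ)) / Z *
            ∑ k : Fin K, genIntensity m K y κ θ k (fun i => (x i : ℤ)) := by
          rw [div_mul_eq_mul_div]
end

section
/- Let θ_i : ℤ → ℝ_{≥0} (i = 1,…,m) satisfy θ_i(x) = 0 for x ≤ 0 and θ_i(x) → ∞ as x → ∞. Let z^1,…,z^n ∈ ℤ^m_{≥0} be pairwise distinct vectors and α_1,…,α_n ∈ ℝ. If ∑_{j=1}^n α_j ∏_{i=1}^m ∏_{r=0}^{z^j_i − 1} θ_i(x_i − r) = 0 for every x ∈ ℤ^m (empty products equal 1), then α_1 = … = α_n = 0; that is, the functions x ↦ ∏_{i=1}^m θ_i(x_i)⋯θ_i(x_i − z_i + 1) indexed by distinct z ∈ ℤ^m_{≥0} are linearly independent. -/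
open Finset Filter

set_option maxHeartbeats 1000000

lemma onevar (θ₀ : ℤ → ℝ) (hnn : ∀ x, 0 ≤ θ₀ x)
    (hlim : Tendsto θ₀ atTop atTop) (g : ℕ → ℝ) :
    ∀ t : Finset ℕ,
    (∀ y : ℤ, ∑ k ∈ t, g k * ∏ r ∈ Finset.range k, θ₀ (y - (r : ℤ)) = 0) →
    ∀ k ∈ t, g k = 0 := by
  intro t
  induction t using Finset.strongInduction with
  | _ t ih =>
    intro h k hk
    have hne : t.Nonempty := ⟨k, hk⟩
    set K := t.max' hne with hKdef
    have hK : K ∈ t := t.max'_mem hne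
    have hgK : g K = 0 := by
      by_contra h0
      set A := ∑ j ∈ t, |g j| with hA
      have hgKpos : 0 < |g K| := abs_pos.mpr h0
      have hAK : |g K| ≤ A := Finset.single_le_sum (f := fun j => |g j|) (fun j _ => abs_nonneg (g j)) hK
      set B := A / |g K| + 1 with hB
      have hB1 : 1 ≤ B := by
        rw [hB]
        have : 0 ≤ A / |g K| := div_nonneg (le_trans hgKpos.le hAK) hgKpos.le
        linarith
      obtain ⟨T, hT⟩ := eventually_atTop.mp ((tendsto_atTop.mp hlim) B)
      set y : ℤ := T + K with hy
      have hfac : ∀ r ∈ Finset.range K, B ≤ θ₀ (y - (r : ℤ)) := by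
        intro r hr
        have hrK : (r : ℤ) < (K : ℤ) := by exact_mod_cast Finset.mem_range.mp hr
        exact hT _ (by omega)
      have hPK : 0 < ∏ r ∈ Finset.range K, θ₀ (y - (r : ℤ)) :=
        Finset.prod_pos fun r hr => lt_of_lt_of_le (by linarith) (hfac r hr)
      have hbound : ∀ j ∈ t.erase K,
          B * (∏ r ∈ Finset.range j, θ₀ (y - (r : ℤ)))
            ≤ ∏ r ∈ Finset.range K, θ₀ (y - (r : ℤ)) := by
        intro j hj
        have hjK : j < K :=
          lt_of_le_of_ne (t.le_max' j (Finset.mem_of_mem_erase hj)) (Finset.ne_of_mem_erase hj)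
        have hsplit : (∏ r ∈ Finset.range j, θ₀ (y - (r : ℤ)))
            * (∏ r ∈ Finset.Ico j K, θ₀ (y - (r : ℤ)))
            = ∏ r ∈ Finset.range K, θ₀ (y - (r : ℤ)) := by
          rw [Finset.range_eq_Ico, Finset.range_eq_Ico]
          exact Finset.prod_Ico_consecutive (fun r : ℕ => θ₀ (y - (r : ℤ))) (Nat.zero_le j) hjK.le
        have hIco : B ≤ ∏ r ∈ Finset.Ico j K, θ₀ (y - (r : ℤ)) := by
          have h1 : (1 : ℝ) ≤ ∏ r ∈ Finset.Ico (j + 1) K, θ₀ (y - (r : ℤ)) := by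
            calc (1 : ℝ) = ∏ _r ∈ Finset.Ico (j + 1) K, (1 : ℝ) := (Finset.prod_const_one).symm
              _ ≤ _ := Finset.prod_le_prod (fun r _ => zero_le_one)
                  (fun r hr => le_trans hB1
                    (hfac r (Finset.mem_range.mpr (Finset.mem_Ico.mp hr).2)))
          have h2 : ∏ r ∈ Finset.Ico j K, θ₀ (y - (r : ℤ))
              = θ₀ (y - (j : ℤ)) * ∏ r ∈ Finset.Ico (j + 1) K, θ₀ (y - (r : ℤ)) :=
            Finset.prod_eq_prod_Ico_succ_bot hjK _
          calc B ≤ θ₀ (y - (j : ℤ)) := hfac j (Finset.mem_range.mpr hjK)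
            _ = θ₀ (y - (j : ℤ)) * 1 := (mul_one _).symm
            _ ≤ θ₀ (y - (j : ℤ)) * ∏ r ∈ Finset.Ico (j + 1) K, θ₀ (y - (r : ℤ)) :=
                mul_le_mul_of_nonneg_left h1 (hnn _)
            _ = _ := h2.symm
        calc B * ∏ r ∈ Finset.range j, θ₀ (y - (r : ℤ))
            ≤ (∏ r ∈ Finset.Ico j K, θ₀ (y - (r : ℤ)))
              * ∏ r ∈ Finset.range j, θ₀ (y - (r : ℤ)) := by
              apply mul_le_mul_of_nonneg_right hIco
              exact Finset.prod_nonneg fun r _ => hnn _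
          _ = _ := by rw [mul_comm]; exact hsplit
      have heq := h y
      rw [← Finset.sum_erase_add _ _ hK] at heq
      have habs : |g K| * (∏ r ∈ Finset.range K, θ₀ (y - (r : ℤ)))
          ≤ ∑ j ∈ t.erase K, |g j| * ∏ r ∈ Finset.range j, θ₀ (y - (r : ℤ)) := by
        have : g K * ∏ r ∈ Finset.range K, θ₀ (y - (r : ℤ))
            = -∑ j ∈ t.erase K, g j * ∏ r ∈ Finset.range j, θ₀ (y - (r : ℤ)) := by
          linarith
        calc |g K| * (∏ r ∈ Finset.range K, θ₀ (y - (r : ℤ)))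
            = |g K * ∏ r ∈ Finset.range K, θ₀ (y - (r : ℤ))| := by
              rw [abs_mul, abs_of_nonneg hPK.le]
          _ = |∑ j ∈ t.erase K, g j * ∏ r ∈ Finset.range j, θ₀ (y - (r : ℤ))| := by
              rw [this, abs_neg]
          _ ≤ ∑ j ∈ t.erase K, |g j * ∏ r ∈ Finset.range j, θ₀ (y - (r : ℤ))| :=
              Finset.abs_sum_le_sum_abs _ _
          _ = ∑ j ∈ t.erase K, |g j| * ∏ r ∈ Finset.range j, θ₀ (y - (r : ℤ)) := by
              refine Finset.sum_congr rfl fun j _ => ?_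
              rw [abs_mul, abs_of_nonneg (Finset.prod_nonneg fun r _ => hnn _)]
      have hstep : B * (|g K| * (∏ r ∈ Finset.range K, θ₀ (y - (r : ℤ))))
          ≤ (A - |g K|) * ∏ r ∈ Finset.range K, θ₀ (y - (r : ℤ)) := by
        have h1 : B * (|g K| * (∏ r ∈ Finset.range K, θ₀ (y - (r : ℤ))))
            ≤ B * ∑ j ∈ t.erase K, |g j| * ∏ r ∈ Finset.range j, θ₀ (y - (r : ℤ)) :=
          mul_le_mul_of_nonneg_left habs (by linarith)
        have h2 : B * ∑ j ∈ t.erase K, |g j| * ∏ r ∈ Finset.range j, θ₀ (y - (r : ℤ))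
            ≤ ∑ j ∈ t.erase K, |g j| * ∏ r ∈ Finset.range K, θ₀ (y - (r : ℤ)) := by
          rw [Finset.mul_sum]
          refine Finset.sum_le_sum fun j hj => ?_
          have := hbound j hj
          have hgj : 0 ≤ |g j| := abs_nonneg _
          calc B * (|g j| * ∏ r ∈ Finset.range j, θ₀ (y - (r : ℤ)))
              = |g j| * (B * ∏ r ∈ Finset.range j, θ₀ (y - (r : ℤ))) := by ring
            _ ≤ |g j| * ∏ r ∈ Finset.range K, θ₀ (y - (r : ℤ)) :=
                mul_le_mul_of_nonneg_left this hgj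
        have h3 : ∑ j ∈ t.erase K, |g j| * ∏ r ∈ Finset.range K, θ₀ (y - (r : ℤ))
            = (A - |g K|) * ∏ r ∈ Finset.range K, θ₀ (y - (r : ℤ)) := by
          rw [← Finset.sum_mul]
          congr 1
          have := Finset.sum_erase_add t (fun j => |g j|) hK
          linarith
        linarith
      have hfin : B * |g K| ≤ A - |g K| := by
        have := (mul_le_mul_iff_of_pos_right hPK).mp (by linarith [hstep] :
          (B * |g K|) * ∏ r ∈ Finset.range K, θ₀ (y - (r : ℤ))
            ≤ (A - |g K|) * ∏ r ∈ Finset.range K, θ₀ (y - (r : ℤ)))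
        exact this
      have hBmul : B * |g K| = A + |g K| := by
        rw [hB, add_mul, div_mul_cancel₀ _ (ne_of_gt hgKpos), one_mul]
      linarith
    rcases eq_or_ne k K with rfl | hne'
    · exact hgK
    · refine ih (t.erase K) (Finset.erase_ssubset hK) (fun y => ?_) k
        (Finset.mem_erase.mpr ⟨hne', hk⟩)
      have := h y
      rw [← Finset.sum_erase_add _ _ hK, hgK] at this
      simpa using this

lemma fiber (m : ℕ) (θ : Fin (m + 1) → ℤ → ℝ) (s : Finset (Fin (m + 1) → ℕ))
    (c : (Fin (m + 1) → ℕ) → ℝ) (x : Fin (m + 1) → ℤ) :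
    ∑ k ∈ s.image (fun w => w (Fin.last m)),
      (∑ w ∈ s.filter (fun w => w (Fin.last m) = k),
        c w * ∏ i : Fin m, ∏ r ∈ Finset.range (w i.castSucc),
          θ i.castSucc (x i.castSucc - (r : ℤ)))
        * ∏ r ∈ Finset.range k, θ (Fin.last m) (x (Fin.last m) - (r : ℤ))
    = ∑ w ∈ s, c w * ∏ i, ∏ r ∈ Finset.range (w i), θ i (x i - (r : ℤ)) := by
  have h2 : ∑ k ∈ s.image (fun w => w (Fin.last m)),
      ∑ w ∈ s.filter (fun w => w (Fin.last m) = k),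
        c w * ∏ i, ∏ r ∈ Finset.range (w i), θ i (x i - (r : ℤ))
      = ∑ w ∈ s, c w * ∏ i, ∏ r ∈ Finset.range (w i), θ i (x i - (r : ℤ)) :=
    Finset.sum_fiberwise_of_maps_to (fun w hw => Finset.mem_image_of_mem _ hw) _
  rw [← h2]
  refine Finset.sum_congr rfl fun k _ => ?_
  rw [Finset.sum_mul]
  refine Finset.sum_congr rfl fun w hw => ?_
  have hwk : w (Fin.last m) = k := (Finset.mem_filter.mp hw).2
  rw [Fin.prod_univ_castSucc (f := fun i => ∏ r ∈ Finset.range (w i), θ i (x i - (r : ℤ)))]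
  rw [hwk]
  ring

lemma keylem : ∀ (m : ℕ) (θ : Fin m → ℤ → ℝ), (∀ i x, 0 ≤ θ i x) →
    (∀ i, Tendsto (θ i) atTop atTop) →
    ∀ (s : Finset (Fin m → ℕ)) (c : (Fin m → ℕ) → ℝ),
    (∀ x : Fin m → ℤ, ∑ w ∈ s, c w * ∏ i, ∏ r ∈ Finset.range (w i), θ i (x i - (r : ℤ)) = 0) →
    ∀ w ∈ s, c w = 0 := by
  intro m
  induction m with
  | zero =>
    intro θ _ _ s c h w hw
    have hs : ∑ v ∈ s, c v = 0 := by simpa using h (fun _ => 0)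
    have hsing : s = {w} :=
      Finset.eq_singleton_iff_unique_mem.mpr ⟨hw, fun v _ => Subsingleton.elim v w⟩
    rw [hsing] at hs
    simpa using hs
  | succ m IH =>
    intro θ hnn hlim s c h w0 hw0
    set θ' : Fin m → ℤ → ℝ := fun i => θ i.castSucc with hθ'
    have claim1 : ∀ (x' : Fin m → ℤ), ∀ k ∈ s.image (fun w => w (Fin.last m)),
        ∑ w ∈ s.filter (fun w => w (Fin.last m) = k),
          c w * ∏ i : Fin m, ∏ r ∈ Finset.range (w i.castSucc), θ' i (x' i - (r : ℤ)) = 0 := by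
      intro x'
      refine onevar (θ (Fin.last m)) (hnn _) (hlim _)
        (fun k => ∑ w ∈ s.filter (fun w => w (Fin.last m) = k),
          c w * ∏ i : Fin m, ∏ r ∈ Finset.range (w i.castSucc), θ' i (x' i - (r : ℤ)))
        (s.image (fun w => w (Fin.last m))) (fun y => ?_)
      have hx := h (Fin.snoc x' y)
      have hf := fiber m θ s c (Fin.snoc x' y)
      rw [hx] at hf
      simpa only [hθ', Fin.snoc_castSucc, Fin.snoc_last] using hf
    set k0 := w0 (Fin.last m) with hk0def
    have hk0 : k0 ∈ s.image (fun w => w (Fin.last m)) := Finset.mem_image_of_mem _ hw0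
    set sk := s.filter (fun w => w (Fin.last m) = k0) with hsk
    have hinj : ∀ w1 ∈ sk, ∀ w2 ∈ sk, Fin.init w1 = Fin.init w2 → w1 = w2 := by
      intro w1 h1 w2 h2 hinit
      have e1 : w1 (Fin.last m) = k0 := (Finset.mem_filter.mp h1).2
      have e2 : w2 (Fin.last m) = k0 := (Finset.mem_filter.mp h2).2
      calc w1 = Fin.snoc (Fin.init w1) (w1 (Fin.last m)) := (Fin.snoc_init_self w1).symm
        _ = Fin.snoc (Fin.init w2) (w2 (Fin.last m)) := by rw [hinit, e1, e2]
        _ = w2 := Fin.snoc_init_self w2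
    have claim2 : ∀ x' : Fin m → ℤ,
        ∑ v ∈ sk.image Fin.init, c (Fin.snoc v k0)
          * ∏ i, ∏ r ∈ Finset.range (v i), θ' i (x' i - (r : ℤ)) = 0 := by
      intro x'
      rw [Finset.sum_image hinj]
      have := claim1 x' k0 hk0
      rw [← this]
      refine Finset.sum_congr rfl fun w hw => ?_
      have hwk : w (Fin.last m) = k0 := (Finset.mem_filter.mp hw).2
      have hsnoc : Fin.snoc (Fin.init w) k0 = w := by
        rw [← hwk]; exact Fin.snoc_init_self w
      rw [hsnoc]
      congr 1
    have hmem : Fin.init w0 ∈ sk.image Fin.init :=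
      Finset.mem_image_of_mem _ (Finset.mem_filter.mpr ⟨hw0, rfl⟩)
    have := IH θ' (fun i x => hnn _ x) (fun i => hlim _) (sk.image Fin.init)
      (fun v => c (Fin.snoc v k0)) claim2 (Fin.init w0) hmem
    have hsnoc0 : Fin.snoc (Fin.init w0) k0 = w0 := by
      rw [hk0def]; exact Fin.snoc_init_self w0
    simpa only [hsnoc0] using this

/-- For `θ_i : ℤ → ℝ_{≥0}` vanishing on `ℤ_{≤0}` and tending to `∞`,
the product functions `x ↦ ∏_i ∏_{r=0}^{z_i - 1} θ_i(x_i - r)` associated with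
pairwise distinct vectors `z^1, …, z^n ∈ ℤ^m_{≥0}` are linearly independent. -/
theorem stmt5 (m : ℕ) (θ : Fin m → ℤ → ℝ)
    (hθnn : ∀ i x, 0 ≤ θ i x)
    (hθ0 : ∀ i, ∀ x : ℤ, x ≤ 0 → θ i x = 0)
    (hθlim : ∀ i, Filter.Tendsto (θ i) Filter.atTop Filter.atTop)
    (n : ℕ) (z : Fin n → Fin m → ℕ) (hz : Function.Injective z) (α : Fin n → ℝ)
    (h : ∀ x : Fin m → ℤ,
      ∑ j : Fin n, α j * ∏ i, ∏ r ∈ Finset.range (z j i), θ i (x i - r) = 0) :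
    ∀ j, α j = 0 := by
  intro j
  set s := Finset.image z Finset.univ with hs
  set c : (Fin m → ℕ) → ℝ :=
    fun w => ∑ j' ∈ Finset.univ.filter (fun j' => z j' = w), α j' with hc
  have hcz : ∀ j', c (z j') = α j' := by
    intro j'
    have hfil : Finset.univ.filter (fun j'' => z j'' = z j') = {j'} := by
      ext j''
      simp [hz.eq_iff]
    simp [hc, hfil]
  have hsum : ∀ x : Fin m → ℤ,
      ∑ w ∈ s, c w * ∏ i, ∏ r ∈ Finset.range (w i), θ i (x i - (r : ℤ)) = 0 := by
    intro x
    rw [hs, Finset.sum_image (fun a _ b _ hab => hz hab)]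
    calc ∑ j' : Fin n, c (z j') * ∏ i, ∏ r ∈ Finset.range (z j' i), θ i (x i - (r : ℤ))
        = ∑ j' : Fin n, α j' * ∏ i, ∏ r ∈ Finset.range (z j' i), θ i (x i - (r : ℤ)) :=
          Finset.sum_congr rfl fun j' _ => by rw [hcz j']
      _ = 0 := h x
  have := keylem m θ hθnn hθlim s c hsum (z j)
    (Finset.mem_image_of_mem _ (Finset.mem_univ j))
  rwa [hcz j] at this
end

section
/- Consider a reaction network with rate constants κ_k and general intensity functions λ_k built from functions θ_i : ℤ → ℝ_{≥0} satisfying θ_i(x) = 0 for x ≤ 0, θ_i(j) > 0 for all integers j ≥ 1, and θ_i(x) → ∞ as x → ∞ for each i = 1,…,m. Suppose that for some c ∈ ℝ^m_{>0} the product-form measure π_c satisfies the stationarity equation ∑_{k=1}^K π_c(x − y_k' + y_k) λ_k(x − y_k' + y_k) = π_c(x) ∑_{k=1}^K λ_k(x) for every x ∈ ℤ^m_{≥0}. Then c is a complex balanced equilibrium of the network: for every complex z ∈ C, ∑_{k : y_k' = z} κ_k c^{y_k} = ∑_{k : y_k = z} κ_k c^{y_k}. -/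
open Finset Filter

/-- Key product identity: `π(z) · ∏_i ∏_{j<w_i} θ_i(z_i - j) = c^w · π(z - w)`. -/
lemma prodForm_shift (m : ℕ) (c : Fin m → ℝ) (θ : Fin m → ℤ → ℝ)
    (hθ0 : ∀ i, ∀ x : ℤ, x ≤ 0 → θ i x = 0)
    (hθpos : ∀ i, ∀ j : ℤ, 1 ≤ j → 0 < θ i j)
    (w : Fin m → ℕ) (z : Fin m → ℤ) :
    prodForm m c θ z * ∏ i, ∏ j ∈ Finset.range (w i), θ i (z i - j) =
      (∏ i, c i ^ w i) * prodForm m c θ (fun i => z i - w i) := by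
  simp only [prodForm]
  by_cases h : ∀ i, (w i : ℤ) ≤ z i
  · have hz : ∀ i, 0 ≤ z i := fun i => le_trans (Int.natCast_nonneg _) (h i)
    have hzw : ∀ i, 0 ≤ z i - w i := fun i => by linarith [h i]
    rw [if_pos hz, if_pos hzw, ← Finset.prod_mul_distrib, ← Finset.prod_mul_distrib]
    refine Finset.prod_congr rfl fun i _ => ?_
    set N := (z i).toNat with hN
    have hNz : z i = (N : ℤ) := (Int.toNat_of_nonneg (hz i)).symm
    have hwz := h i
    have hwN : w i ≤ N := by omega
    have hNw : (z i - w i).toNat = N - w i := by omega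
    have hD : ∏ j ∈ range N, θ i (j + 1) =
        (∏ j ∈ range (N - w i), θ i (j + 1)) * ∏ j ∈ range (w i), θ i (z i - j) := by
      have h1 : N = (N - w i) + w i := by omega
      conv_lhs => rw [h1]
      rw [Finset.prod_range_add]
      congr 1
      rw [← Finset.prod_range_reflect (fun j => θ i (z i - j)) (w i)]
      refine Finset.prod_congr rfl fun j hj => ?_
      have hj' : j < w i := Finset.mem_range.mp hj
      congr 1
      omega
    have hDs : (0:ℝ) < ∏ j ∈ range (N - w i), θ i (j + 1) :=
      Finset.prod_pos fun j _ => hθpos i _ (by omega)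
    have hP : (0:ℝ) < ∏ j ∈ range (w i), θ i (z i - j) :=
      Finset.prod_pos fun j hj => hθpos i _ (by
        have := Finset.mem_range.mp hj; omega)
    rw [hNw, hD]
    have hcN : c i ^ N = c i ^ w i * c i ^ (N - w i) := by
      rw [← pow_add]; congr 1; omega
    field_simp
    rw [hcN]
  · push_neg at h
    obtain ⟨i0, hi0⟩ := h
    have h2 : ¬ ∀ i, 0 ≤ z i - w i := by push_neg; exact ⟨i0, by omega⟩
    rw [if_neg h2, mul_zero]
    by_cases hz : ∀ i, 0 ≤ z i
    · have h1 : ∏ i, ∏ j ∈ Finset.range (w i), θ i (z i - j) = 0 := by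
        have hz0 := hz i0
        refine Finset.prod_eq_zero (Finset.mem_univ i0) ?_
        refine Finset.prod_eq_zero (Finset.mem_range.mpr (show (z i0).toNat < w i0 by omega)) ?_
        apply hθ0
        omega
      rw [h1, mul_zero]
    · rw [if_neg hz, zero_mul]

lemma prodForm_diag (m : ℕ) (c : Fin m → ℝ) (θ : Fin m → ℤ → ℝ) (z : Fin m → ℕ) :
    prodForm m c θ (fun i => (z i : ℤ) - z i) = 1 := by
  simp [prodForm]

lemma prodForm_of_neg (m : ℕ) (c : Fin m → ℝ) (θ : Fin m → ℤ → ℝ) (x : Fin m → ℤ)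
    (h : ∃ i, x i < 0) : prodForm m c θ x = 0 := by
  obtain ⟨i, hi⟩ := h
  rw [prodForm, if_neg]
  push_neg
  exact ⟨i, by omega⟩

/-- (Converse, `θ_i → ∞` case.) If the product-form measure `π_c`
satisfies the stationarity equation for the stochastic model with general intensity
functions, then `c` is a complex balanced equilibrium. -/
theorem stmt6 (m K : ℕ) (y y' : Fin K → Fin m → ℕ) (κ : Fin K → ℝ)
    (c : Fin m → ℝ) (θ : Fin m → ℤ → ℝ)
    (hyy' : ∀ k, y k ≠ y' k) (hκ : ∀ k, 0 < κ k) (hc : ∀ i, 0 < c i)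
    (hθnn : ∀ i x, 0 ≤ θ i x)
    (hθ0 : ∀ i, ∀ x : ℤ, x ≤ 0 → θ i x = 0)
    (hθpos : ∀ i, ∀ j : ℤ, 1 ≤ j → 0 < θ i j)
    (hθlim : ∀ i, Filter.Tendsto (θ i) Filter.atTop Filter.atTop)
    (hstat : stationaryEq m K y y' (prodForm m c θ) (genIntensity m K y κ θ)) :
    complexBalanced m K y y' κ c := by
  classical
  set a : Fin K → ℝ := fun k => κ k * ∏ i, c i ^ y k i with ha
  -- key identity: π(z) λ_k(z) = a_k π(z - y_k)
  have key : ∀ (k : Fin K) (z : Fin m → ℤ),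
      prodForm m c θ z * genIntensity m K y κ θ k z
        = a k * prodForm m c θ (fun i => z i - y k i) := by
    intro k z
    have h := prodForm_shift m c θ hθ0 hθpos (y k) z
    unfold genIntensity
    calc prodForm m c θ z * (κ k * ∏ i, ∏ j ∈ Finset.range (y k i), θ i (z i - j))
        = κ k * (prodForm m c θ z * ∏ i, ∏ j ∈ Finset.range (y k i), θ i (z i - j)) := by ring
      _ = κ k * ((∏ i, c i ^ y k i) * prodForm m c θ (fun i => z i - y k i)) := by rw [h]
      _ = a k * prodForm m c θ (fun i => z i - y k i) := by rw [ha]; ring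
  -- rewritten stationarity equation
  have hEq : ∀ x : Fin m → ℕ,
      ∑ k, a k * prodForm m c θ (fun i => (x i : ℤ) - y' k i)
        = ∑ k, a k * prodForm m c θ (fun i => (x i : ℤ) - y k i) := by
    intro x
    have h := hstat x
    rw [Finset.mul_sum] at h
    calc ∑ k, a k * prodForm m c θ (fun i => (x i : ℤ) - y' k i)
        = ∑ k : Fin K, prodForm m c θ (fun i => (x i : ℤ) - y' k i + y k i) *
            genIntensity m K y κ θ k (fun i => (x i : ℤ) - y' k i + y k i) := by
          refine Finset.sum_congr rfl fun k _ => ?_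
          have harg : (fun i => ((x i : ℤ) - y' k i + y k i) - y k i)
              = fun i => (x i : ℤ) - y' k i := by funext i; ring
          rw [key k (fun i => (x i : ℤ) - y' k i + y k i), harg]
      _ = ∑ k : Fin K, prodForm m c θ (fun i => (x i : ℤ)) *
            genIntensity m K y κ θ k (fun i => (x i : ℤ)) := h
      _ = ∑ k, a k * prodForm m c θ (fun i => (x i : ℤ) - y k i) := by
          refine Finset.sum_congr rfl fun k _ => ?_
          exact key k (fun i => (x i : ℤ))
  -- main induction
  have main : ∀ n : ℕ, ∀ z : Fin m → ℕ, (∑ i, z i) = n →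
      ∑ k ∈ Finset.univ.filter (fun k => y' k = z), a k
        = ∑ k ∈ Finset.univ.filter (fun k => y k = z), a k := by
    intro n
    induction n using Nat.strong_induction_on with
    | _ n ih =>
      intro z hzn
      set T : Finset (Fin m → ℕ) := (Finset.univ.image y) ∪ (Finset.univ.image y') with hT
      have hyT : ∀ k, y k ∈ T := fun k =>
        Finset.mem_union_left _ (Finset.mem_image_of_mem y (Finset.mem_univ k))
      have hy'T : ∀ k, y' k ∈ T := fun k =>
        Finset.mem_union_right _ (Finset.mem_image_of_mem y' (Finset.mem_univ k))
      have hgroup : ∀ f : Fin K → Fin m → ℕ, (∀ k, f k ∈ T) →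
          ∑ k, a k * prodForm m c θ (fun i => (z i : ℤ) - f k i)
            = ∑ w ∈ T, (∑ k ∈ Finset.univ.filter (fun k => f k = w), a k) *
                prodForm m c θ (fun i => (z i : ℤ) - w i) := by
        intro f hf
        rw [← Finset.sum_fiberwise_of_maps_to (fun k _ => hf k)
          (fun k => a k * prodForm m c θ (fun i => (z i : ℤ) - f k i))]
        refine Finset.sum_congr rfl fun w _ => ?_
        rw [Finset.sum_mul]
        refine Finset.sum_congr rfl fun k hk => ?_
        have hfk : f k = w := (Finset.mem_filter.mp hk).2
        rw [hfk]
      have heq := hEq z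
      rw [hgroup y' hy'T, hgroup y hyT] at heq
      have hsub : ∑ w ∈ T,
          ((∑ k ∈ Finset.univ.filter (fun k => y' k = w), a k)
            - (∑ k ∈ Finset.univ.filter (fun k => y k = w), a k)) *
            prodForm m c θ (fun i => (z i : ℤ) - w i) = 0 := by
        simp only [sub_mul]
        rw [Finset.sum_sub_distrib, heq, sub_self]
      by_cases hzT : z ∈ T
      · rw [← Finset.add_sum_erase T _ hzT] at hsub
        have hrest : ∀ w ∈ T.erase z,
            ((∑ k ∈ Finset.univ.filter (fun k => y' k = w), a k)
              - (∑ k ∈ Finset.univ.filter (fun k => y k = w), a k)) *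
              prodForm m c θ (fun i => (z i : ℤ) - w i) = 0 := by
          intro w hw
          obtain ⟨hwz, hwT⟩ := Finset.mem_erase.mp hw
          by_cases hle : ∀ i, w i ≤ z i
          · have hex : ∃ i, w i ≠ z i := by
              by_contra hcon
              push_neg at hcon
              exact hwz (funext hcon)
            obtain ⟨i, hi⟩ := hex
            have hlt : ∑ i, w i < ∑ i, z i :=
              Finset.sum_lt_sum (fun i _ => hle i)
                ⟨i, Finset.mem_univ i, lt_of_le_of_ne (hle i) hi⟩
            have := ih (∑ i, w i) (by omega) w rfl
            rw [this, sub_self, zero_mul]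
          · push_neg at hle
            obtain ⟨i0, hi0⟩ := hle
            rw [prodForm_of_neg m c θ _ ⟨i0, by omega⟩, mul_zero]
        rw [Finset.sum_eq_zero hrest, add_zero, prodForm_diag, mul_one, sub_eq_zero] at hsub
        exact hsub
      · have h1 : Finset.univ.filter (fun k => y' k = z) = ∅ :=
          Finset.filter_eq_empty_iff.mpr fun k _ => fun hc' => hzT (hc' ▸ hy'T k)
        have h2 : Finset.univ.filter (fun k => y k = z) = ∅ :=
          Finset.filter_eq_empty_iff.mpr fun k _ => fun hc' => hzT (hc' ▸ hyT k)
        rw [h1, h2]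
  intro z _
  exact main (∑ i, z i) z rfl
end

section
/- Consider a reaction network with rate constants κ_k and general intensity functions λ_k built from functions θ_i : ℤ → ℝ_{≥0} satisfying θ_i(x) = 0 for x ≤ 0 and θ_i(j) > 0 for all integers j ≥ 1, and suppose that for each i = 1,…,m either θ_i(x) → ∞ or θ_i(x) → 0 as x → ∞. Suppose that for some c ∈ ℝ^m_{>0} the product-form measure π_c satisfies the stationarity equation ∑_{k=1}^K π_c(x − y_k' + y_k) λ_k(x − y_k' + y_k) = π_c(x) ∑_{k=1}^K λ_k(x) for every x ∈ ℤ^m_{≥0}. Then c is a complex balanced equilibrium of the network: for every complex z ∈ C, ∑_{k : y_k' = z} κ_k c^{y_k} = ∑_{k : y_k = z} κ_k c^{y_k}. -/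
open Finset Filter

-- Auxiliary definitions and lemmas

noncomputable def hhF (c : ℝ) (θ : ℤ → ℝ) (n : ℤ) : ℝ :=
  if 0 ≤ n then c ^ n.toNat / ∏ j ∈ Finset.range n.toNat, θ (j + 1) else 0

lemma hhF_T_pos {θ : ℤ → ℝ} (hθpos : ∀ j : ℤ, 1 ≤ j → 0 < θ j) (k : ℕ) :
    0 < ∏ j ∈ Finset.range k, θ (j + 1) :=
  Finset.prod_pos fun j _ => hθpos _ (by omega)

lemma hhF_pos {c : ℝ} {θ : ℤ → ℝ} (hc : 0 < c) (hθpos : ∀ j : ℤ, 1 ≤ j → 0 < θ j)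
    {n : ℤ} (hn : 0 ≤ n) : 0 < hhF c θ n := by
  rw [hhF, if_pos hn]
  exact div_pos (pow_pos hc _) (hhF_T_pos hθpos _)

lemma hhF_neg {c : ℝ} {θ : ℤ → ℝ} {n : ℤ} (hn : n < 0) : hhF c θ n = 0 := by
  rw [hhF, if_neg (by omega)]

lemma hhF_step {c : ℝ} {θ : ℤ → ℝ} (hc : 0 < c) (hθ0 : ∀ x : ℤ, x ≤ 0 → θ x = 0)
    (hθpos : ∀ j : ℤ, 1 ≤ j → 0 < θ j) (n : ℤ) :
    hhF c θ n * θ n = c * hhF c θ (n - 1) := by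
  rcases lt_or_ge n 1 with hn | hn
  · rw [hθ0 n (by omega), mul_zero, hhF_neg (by omega), mul_zero]
  · obtain ⟨k, rfl⟩ : ∃ k : ℕ, n = (k : ℤ) + 1 := ⟨(n - 1).toNat, by omega⟩
    have h1 : ((k : ℤ) + 1).toNat = k + 1 := by omega
    have h2 : ((k : ℤ) + 1 - 1).toNat = k := by omega
    rw [hhF, hhF, if_pos (by omega), if_pos (by omega), h1, h2, Finset.prod_range_succ]
    have hT : (0:ℝ) < ∏ j ∈ Finset.range k, θ (j + 1) := hhF_T_pos hθpos k
    have hθk : (0:ℝ) < θ ((k:ℤ) + 1) := hθpos _ (by omega)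
    field_simp
    ring

lemma hhF_prod {c : ℝ} {θ : ℤ → ℝ} (hc : 0 < c) (hθ0 : ∀ x : ℤ, x ≤ 0 → θ x = 0)
    (hθpos : ∀ j : ℤ, 1 ≤ j → 0 < θ j) (n : ℤ) (a : ℕ) :
    hhF c θ n * ∏ j ∈ Finset.range a, θ (n - j) = c ^ a * hhF c θ (n - a) := by
  induction a with
  | zero => simp
  | succ a ih =>
    rw [Finset.prod_range_succ, ← mul_assoc, ih, mul_assoc,
      hhF_step hc hθ0 hθpos (n - a)]
    have harg : n - ((a : ℤ) + 1) = n - a - 1 := by ring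
    push_cast
    rw [harg]
    ring

lemma hhF_ratio_inf {c : ℝ} {θ : ℤ → ℝ} (hc : 0 < c) (hθ0 : ∀ x : ℤ, x ≤ 0 → θ x = 0)
    (hθpos : ∀ j : ℤ, 1 ≤ j → 0 < θ j) (hlim : Tendsto θ atTop atTop) :
    Tendsto (fun n : ℤ => hhF c θ (n + 1) / hhF c θ n) atTop (nhds 0) := by
  have hev : (fun n : ℤ => c / θ (n + 1)) =ᶠ[atTop]
      fun n : ℤ => hhF c θ (n + 1) / hhF c θ n := by
    filter_upwards [eventually_ge_atTop (0 : ℤ)] with n hn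
    have hstep := hhF_step hc hθ0 hθpos (n + 1)
    rw [add_sub_cancel_right] at hstep
    have h1 : hhF c θ n ≠ 0 := ne_of_gt (hhF_pos hc hθpos hn)
    have h2 : θ (n + 1) ≠ 0 := ne_of_gt (hθpos _ (by omega))
    field_simp
    linarith [hstep]
  refine Tendsto.congr' hev ?_
  have hshift : Tendsto (fun n : ℤ => θ (n + 1)) atTop atTop :=
    hlim.comp (tendsto_atTop_add_const_right _ 1 tendsto_id)
  exact Tendsto.div_atTop tendsto_const_nhds hshift

lemma hhF_ratio_zero {c : ℝ} {θ : ℤ → ℝ} (hc : 0 < c) (hθ0 : ∀ x : ℤ, x ≤ 0 → θ x = 0)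
    (hθpos : ∀ j : ℤ, 1 ≤ j → 0 < θ j) (hlim : Tendsto θ atTop (nhds 0)) :
    Tendsto (fun n : ℤ => hhF c θ n / hhF c θ (n + 1)) atTop (nhds 0) := by
  have hev : (fun n : ℤ => θ (n + 1) / c) =ᶠ[atTop]
      fun n : ℤ => hhF c θ n / hhF c θ (n + 1) := by
    filter_upwards [eventually_ge_atTop (0 : ℤ)] with n hn
    have hstep := hhF_step hc hθ0 hθpos (n + 1)
    rw [add_sub_cancel_right] at hstep
    have h1 : hhF c θ (n + 1) ≠ 0 := ne_of_gt (hhF_pos hc hθpos (by omega))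
    have h2 : c ≠ 0 := ne_of_gt hc
    field_simp
    linarith [hstep]
  refine Tendsto.congr' hev ?_
  have hshift : Tendsto (fun n : ℤ => θ (n + 1)) atTop (nhds 0) :=
    hlim.comp (tendsto_atTop_add_const_right _ 1 tendsto_id)
  simpa using hshift.div_const c

lemma gap_tendsto (u : ℤ → ℝ) (hne : ∀ n : ℤ, 0 ≤ n → u n ≠ 0)
    (h1 : Tendsto (fun n : ℤ => u (n + 1) / u n) atTop (nhds 0)) :
    ∀ g : ℕ, Tendsto (fun n : ℤ => u (n + g + 1) / u n) atTop (nhds 0) := by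
  intro g
  induction g with
  | zero => simpa using h1
  | succ g ih =>
    have hcomp : Tendsto (fun n : ℤ => u ((n + (g + 1)) + 1) / u (n + (g + 1)))
        atTop (nhds 0) := h1.comp (tendsto_atTop_add_const_right _ ((g : ℤ) + 1) tendsto_id)
    have hmul := hcomp.mul ih
    rw [mul_zero] at hmul
    refine Tendsto.congr' ?_ hmul
    filter_upwards [eventually_ge_atTop (0 : ℤ)] with n hn
    have h2 : u (n + g + 1) ≠ 0 := hne _ (by omega)
    have harg1 : n + ((g : ℤ) + 1) + 1 = n + (g + 1 : ℕ) + 1 := by push_cast; ring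
    have harg2 : n + ((g : ℤ) + 1) = n + g + 1 := by ring
    rw [harg1, harg2] at *
    rw [div_mul_div_cancel₀]
    exact h2


lemma dom_of_gap (u : ℤ → ℝ)
    (hgap : ∀ g : ℕ, Tendsto (fun n : ℤ => u (n + g + 1) / u n) atTop (nhds 0))
    {a b : ℕ} (hab : a < b) :
    Tendsto (fun n : ℕ => u ((n : ℤ) - a) / u ((n : ℤ) - b)) atTop (nhds 0) := by
  have hto : Tendsto (fun n : ℕ => (n : ℤ) - b) atTop atTop := by
    have := tendsto_atTop_add_const_right atTop (-(b : ℤ)) tendsto_natCast_atTop_atTop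
    refine this.congr fun n => by ring
  have hcomp := (hgap (b - a - 1)).comp hto
  refine hcomp.congr fun n => ?_
  have harg : (n : ℤ) - b + ((b - a - 1 : ℕ) : ℤ) + 1 = (n : ℤ) - a := by omega
  simp only [Function.comp_apply, harg]


lemma indepAux : ∀ (m : ℕ) (h : Fin m → ℤ → ℝ),
    (∀ i (n : ℤ), 0 ≤ n → 0 < h i n) →
    (∀ i, (∀ a b : ℕ, a < b →
        Tendsto (fun n : ℕ => h i ((n:ℤ) - a) / h i ((n:ℤ) - b)) atTop (nhds 0)) ∨
      (∀ a b : ℕ, a < b →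
        Tendsto (fun n : ℕ => h i ((n:ℤ) - b) / h i ((n:ℤ) - a)) atTop (nhds 0))) →
    ∀ (S : Finset (Fin m → ℕ)) (d : (Fin m → ℕ) → ℝ),
    (∀ x : Fin m → ℕ, ∑ z ∈ S, d z * ∏ i, h i ((x i : ℤ) - z i) = 0) →
    ∀ z ∈ S, d z = 0 := by
  intro m
  induction m with
  | zero =>
    intro h _ _ S d heq z hz
    have hS : S = {z} :=
      Finset.eq_singleton_iff_unique_mem.mpr ⟨hz, fun w _ => Subsingleton.elim w z⟩
    have := heq z
    rw [hS] at this
    simpa using this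
  | succ m IH =>
    intro h hpos hdom S
    induction S using Finset.strongInductionOn with
    | _ S ihS =>
      intro d heq z hzS
      have hSne : S.Nonempty := ⟨z, hzS⟩
      set A : Finset ℕ := S.image (fun w => w 0) with hA
      have hAne : A.Nonempty := hSne.image _
      obtain ⟨a, haA, hdom0⟩ : ∃ a ∈ A, ∀ b ∈ A, b ≠ a →
          Tendsto (fun n : ℕ => h 0 ((n:ℤ) - b) / h 0 ((n:ℤ) - a)) atTop (nhds 0) := by
        rcases hdom 0 with hd | hd
        · exact ⟨A.max' hAne, A.max'_mem hAne,
            fun b hb hne => hd b _ (lt_of_le_of_ne (A.le_max' b hb) hne)⟩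
        · exact ⟨A.min' hAne, A.min'_mem hAne,
            fun b hb hne => hd _ b (lt_of_le_of_ne (A.min'_le b hb) (Ne.symm hne))⟩
      set P : (Fin (m+1) → ℕ) → (Fin m → ℕ) → ℝ :=
        fun w x' => ∏ i : Fin m, h i.succ ((x' i : ℤ) - w i.succ) with hP
      -- main slice identity
      have key : ∀ x' : Fin m → ℕ,
          ∑ w ∈ S.filter (fun w => w 0 = a), d w * P w x' = 0 := by
        intro x'
        have hmain : ∀ n : ℕ,
            ∑ w ∈ S, d w * (h 0 ((n:ℤ) - w 0) * P w x') = 0 := by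
          intro n
          have h0 := heq (Fin.cons n x')
          rw [← h0]
          refine Finset.sum_congr rfl fun w hw => ?_
          congr 1
          rw [Fin.prod_univ_succ]
          simp [hP]
        set F : ℕ → ℝ := fun n =>
          ∑ w ∈ S.filter (fun w => w 0 ≠ a),
            d w * (h 0 ((n:ℤ) - w 0) / h 0 ((n:ℤ) - a)) * P w x' with hF
        have hFlim : Tendsto F atTop (nhds 0) := by
          have h0 : (0:ℝ) = ∑ w ∈ S.filter (fun w => w 0 ≠ a), (0:ℝ) := by simp
          rw [hF, h0]
          refine tendsto_finset_sum _ fun w hw => ?_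
          have hwA : w 0 ∈ A := Finset.mem_image_of_mem _ (Finset.mem_filter.mp hw).1
          have hwne : w 0 ≠ a := (Finset.mem_filter.mp hw).2
          have := ((hdom0 (w 0) hwA hwne).const_mul (d w)).mul_const (P w x')
          simpa using this
        have hFconst : ∀ᶠ n : ℕ in atTop,
            F n = -∑ w ∈ S.filter (fun w => w 0 = a), d w * P w x' := by
          filter_upwards [eventually_ge_atTop a] with n hn
          have hha : h 0 ((n:ℤ) - a) ≠ 0 := by
            refine ne_of_gt (hpos 0 _ ?_)
            omega
          have hfull : ∑ w ∈ S,
              d w * (h 0 ((n:ℤ) - w 0) / h 0 ((n:ℤ) - a)) * P w x' = 0 := by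
            have hcalc : ∑ w ∈ S,
                d w * (h 0 ((n:ℤ) - w 0) / h 0 ((n:ℤ) - a)) * P w x'
                = (∑ w ∈ S, d w * (h 0 ((n:ℤ) - w 0) * P w x')) / h 0 ((n:ℤ) - a) := by
              rw [Finset.sum_div]
              refine Finset.sum_congr rfl fun w _ => ?_
              field_simp
            rw [hcalc, hmain n, zero_div]
          have hsplit := Finset.sum_filter_add_sum_filter_not S (fun w => w 0 = a)
            (fun w => d w * (h 0 ((n:ℤ) - w 0) / h 0 ((n:ℤ) - a)) * P w x')
          have heqa : ∑ w ∈ S.filter (fun w => w 0 = a),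
              d w * (h 0 ((n:ℤ) - w 0) / h 0 ((n:ℤ) - a)) * P w x'
              = ∑ w ∈ S.filter (fun w => w 0 = a), d w * P w x' := by
            refine Finset.sum_congr rfl fun w hw => ?_
            rw [(Finset.mem_filter.mp hw).2, div_self hha, mul_one]
          rw [hfull] at hsplit
          rw [heqa] at hsplit
          rw [hF]
          linarith
        have hC := tendsto_nhds_unique (Tendsto.congr' hFconst hFlim) tendsto_const_nhds
        linarith [hC]
      -- slice coefficients vanish via IH on m
      have hslice : ∀ w ∈ S.filter (fun w => w 0 = a), d w = 0 := by
        classical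
        set Sl := S.filter (fun w => w 0 = a) with hSl
        have hinj : ∀ w1 ∈ Sl, ∀ w2 ∈ Sl, Fin.tail w1 = Fin.tail w2 → w1 = w2 := by
          intro w1 hw1 w2 hw2 ht
          have h1 : w1 0 = a := (Finset.mem_filter.mp hw1).2
          have h2 : w2 0 = a := (Finset.mem_filter.mp hw2).2
          have e1 : w1 = Fin.cons a (Fin.tail w1) := by rw [← h1, Fin.cons_self_tail]
          have e2 : w2 = Fin.cons a (Fin.tail w2) := by rw [← h2, Fin.cons_self_tail]
          rw [e1, e2, ht]
        have heqT : ∀ x' : Fin m → ℕ,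
            ∑ t ∈ Sl.image Fin.tail, d (Fin.cons a t) *
              ∏ i : Fin m, h i.succ ((x' i : ℤ) - t i) = 0 := by
          intro x'
          rw [Finset.sum_image hinj, ← key x']
          refine Finset.sum_congr rfl fun w hw => ?_
          have hw0 : w 0 = a := (Finset.mem_filter.mp hw).2
          rw [← hw0, Fin.cons_self_tail]
          rfl
        have hIH := IH (fun i => h i.succ) (fun i n hn => hpos i.succ n hn)
          (fun i => hdom i.succ) (Sl.image Fin.tail) (fun t => d (Fin.cons a t)) heqT
        intro w hw
        have hw0 : w 0 = a := (Finset.mem_filter.mp hw).2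
        have hz0 : d (Fin.cons a (Fin.tail w)) = 0 :=
          hIH (Fin.tail w) (Finset.mem_image_of_mem _ hw)
        rw [← hw0, Fin.cons_self_tail] at hz0
        exact hz0
      -- remove the slice and use strong induction on S
      have hS' : S.filter (fun w => w 0 ≠ a) ⊂ S := by
        obtain ⟨w0, hw0S, hw0⟩ := Finset.mem_image.mp haA
        exact Finset.filter_ssubset.mpr ⟨w0, hw0S, by simp [hw0]⟩
      have heq' : ∀ x : Fin (m+1) → ℕ,
          ∑ w ∈ S.filter (fun w => w 0 ≠ a), d w * ∏ i, h i ((x i : ℤ) - w i) = 0 := by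
        intro x
        have hsplit := Finset.sum_filter_add_sum_filter_not S (fun w => w 0 = a)
          (fun w => d w * ∏ i, h i ((x i : ℤ) - w i))
        have hz : ∑ w ∈ S.filter (fun w => w 0 = a),
            d w * ∏ i, h i ((x i : ℤ) - w i) = 0 :=
          Finset.sum_eq_zero fun w hw => by rw [hslice w hw, zero_mul]
        rw [heq x, hz, zero_add] at hsplit
        exact hsplit
      have hrest := ihS _ hS' d heq'
      by_cases hz0 : z 0 = a
      · exact hslice z (Finset.mem_filter.mpr ⟨hzS, hz0⟩)
      · exact hrest z (Finset.mem_filter.mpr ⟨hzS, hz0⟩)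

/-- (Converse, `θ_i → ∞` or `θ_i → 0` case.) If each `θ_i` tends to
`∞` or to `0` and the product-form measure `π_c` satisfies the stationarity equation,
then `c` is a complex balanced equilibrium. -/
theorem stmt7 (m K : ℕ) (y y' : Fin K → Fin m → ℕ) (κ : Fin K → ℝ)
    (c : Fin m → ℝ) (θ : Fin m → ℤ → ℝ)
    (hyy' : ∀ k, y k ≠ y' k) (hκ : ∀ k, 0 < κ k) (hc : ∀ i, 0 < c i)
    (hθnn : ∀ i x, 0 ≤ θ i x)
    (hθ0 : ∀ i, ∀ x : ℤ, x ≤ 0 → θ i x = 0)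
    (hθpos : ∀ i, ∀ j : ℤ, 1 ≤ j → 0 < θ i j)
    (hθlim : ∀ i, Filter.Tendsto (θ i) Filter.atTop Filter.atTop ∨
      Filter.Tendsto (θ i) Filter.atTop (nhds 0))
    (hstat : stationaryEq m K y y' (prodForm m c θ) (genIntensity m K y κ θ)) :
    complexBalanced m K y y' κ c := by
  classical
  set hh : Fin m → ℤ → ℝ := fun i => hhF (c i) (θ i) with hhdef
  have hprod : ∀ v : Fin m → ℤ, prodForm m c θ v = ∏ i, hh i (v i) := by
    intro v
    rw [prodForm]
    by_cases hp : ∀ i, 0 ≤ v i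
    · rw [if_pos hp]
      refine Finset.prod_congr rfl fun i _ => ?_
      simp only [hhdef, hhF, if_pos (hp i)]
    · rw [if_neg hp]
      push_neg at hp
      obtain ⟨i, hi⟩ := hp
      symm
      refine Finset.prod_eq_zero (Finset.mem_univ i) ?_
      simp only [hhdef, hhF, if_neg (not_le.mpr hi)]
  have hterm : ∀ (k : Fin K) (v : Fin m → ℤ),
      prodForm m c θ v * genIntensity m K y κ θ k v
        = (κ k * ∏ i, c i ^ y k i) * ∏ i, hh i (v i - y k i) := by
    intro k v
    rw [hprod, genIntensity]
    calc (∏ i, hh i (v i)) * (κ k * ∏ i, ∏ j ∈ Finset.range (y k i), θ i (v i - j))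
        = κ k * ∏ i, (hh i (v i) * ∏ j ∈ Finset.range (y k i), θ i (v i - j)) := by
          rw [Finset.prod_mul_distrib]; ring
      _ = κ k * ∏ i, (c i ^ y k i * hh i (v i - y k i)) := by
          rw [Finset.prod_congr rfl
            fun i _ => hhF_prod (hc i) (hθ0 i) (hθpos i) (v i) (y k i)]
      _ = (κ k * ∏ i, c i ^ y k i) * ∏ i, hh i (v i - y k i) := by
          rw [Finset.prod_mul_distrib]; ring
  have hstar : ∀ x : Fin m → ℕ,
      ∑ k, (κ k * ∏ i, c i ^ y k i) * ∏ i, hh i ((x i : ℤ) - y' k i)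
        = ∑ k, (κ k * ∏ i, c i ^ y k i) * ∏ i, hh i ((x i : ℤ) - y k i) := by
    intro x
    calc ∑ k, (κ k * ∏ i, c i ^ y k i) * ∏ i, hh i ((x i : ℤ) - y' k i)
        = ∑ k, prodForm m c θ (fun i => (x i : ℤ) - y' k i + y k i) *
            genIntensity m K y κ θ k (fun i => (x i : ℤ) - y' k i + y k i) := by
          refine Finset.sum_congr rfl fun k _ => ?_
          rw [hterm]
          congr 1
          refine Finset.prod_congr rfl fun i _ => ?_
          congr 1
          ring
      _ = prodForm m c θ (fun i => (x i : ℤ)) *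
            ∑ k, genIntensity m K y κ θ k (fun i => (x i : ℤ)) := hstat x
      _ = ∑ k, prodForm m c θ (fun i => (x i : ℤ)) *
            genIntensity m K y κ θ k (fun i => (x i : ℤ)) := by rw [Finset.mul_sum]
      _ = ∑ k, (κ k * ∏ i, c i ^ y k i) * ∏ i, hh i ((x i : ℤ) - y k i) := by
          refine Finset.sum_congr rfl fun k _ => ?_
          exact hterm k _
  -- group by complexes
  set S : Finset (Fin m → ℕ) := Finset.univ.image y ∪ Finset.univ.image y' with hSdef
  set d : (Fin m → ℕ) → ℝ := fun z =>
    (∑ k ∈ Finset.univ.filter (fun k => y' k = z), κ k * ∏ i, c i ^ y k i) -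
    (∑ k ∈ Finset.univ.filter (fun k => y k = z), κ k * ∏ i, c i ^ y k i) with hddef
  have hgroup : ∀ (g : Fin K → Fin m → ℕ), (∀ k ∈ Finset.univ, g k ∈ S) →
      ∀ x : Fin m → ℕ,
      ∑ z ∈ S, (∑ k ∈ Finset.univ.filter (fun k => g k = z), κ k * ∏ i, c i ^ y k i) *
          ∏ i, hh i ((x i : ℤ) - z i)
        = ∑ k, (κ k * ∏ i, c i ^ y k i) * ∏ i, hh i ((x i : ℤ) - g k i) := by
    intro g hg x
    rw [← Finset.sum_fiberwise_of_maps_to hg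
      (fun k => (κ k * ∏ i, c i ^ y k i) * ∏ i, hh i ((x i : ℤ) - g k i))]
    refine Finset.sum_congr rfl fun z hz => ?_
    rw [Finset.sum_mul]
    refine Finset.sum_congr rfl fun k hk => ?_
    rw [(Finset.mem_filter.mp hk).2]
  have hmapsy : ∀ k : Fin K, k ∈ Finset.univ → y k ∈ S := fun k _ =>
    Finset.mem_union_left _ (Finset.mem_image_of_mem y (Finset.mem_univ k))
  have hmapsy' : ∀ k : Fin K, k ∈ Finset.univ → y' k ∈ S := fun k _ =>
    Finset.mem_union_right _ (Finset.mem_image_of_mem y' (Finset.mem_univ k))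
  have hsum : ∀ x : Fin m → ℕ, ∑ z ∈ S, d z * ∏ i, hh i ((x i : ℤ) - z i) = 0 := by
    intro x
    calc ∑ z ∈ S, d z * ∏ i, hh i ((x i : ℤ) - z i)
        = (∑ z ∈ S, (∑ k ∈ Finset.univ.filter (fun k => y' k = z),
              κ k * ∏ i, c i ^ y k i) * ∏ i, hh i ((x i : ℤ) - z i)) -
          (∑ z ∈ S, (∑ k ∈ Finset.univ.filter (fun k => y k = z),
              κ k * ∏ i, c i ^ y k i) * ∏ i, hh i ((x i : ℤ) - z i)) := by
          rw [← Finset.sum_sub_distrib]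
          exact Finset.sum_congr rfl fun z _ => sub_mul _ _ _
      _ = 0 := by rw [hgroup y' hmapsy', hgroup y hmapsy, hstar x, sub_self]
  -- positivity and dominance
  have hpos : ∀ i (n : ℤ), 0 ≤ n → 0 < hh i n := fun i n hn =>
    hhF_pos (hc i) (hθpos i) hn
  have hdom : ∀ i, (∀ a b : ℕ, a < b →
      Tendsto (fun n : ℕ => hh i ((n:ℤ) - a) / hh i ((n:ℤ) - b)) atTop (nhds 0)) ∨
      (∀ a b : ℕ, a < b →
      Tendsto (fun n : ℕ => hh i ((n:ℤ) - b) / hh i ((n:ℤ) - a)) atTop (nhds 0)) := by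
    intro i
    rcases hθlim i with hl | hl
    · left
      intro a b hab
      exact dom_of_gap _ (gap_tendsto _
        (fun n hn => ne_of_gt (hhF_pos (hc i) (hθpos i) hn))
        (hhF_ratio_inf (hc i) (hθ0 i) (hθpos i) hl)) hab
    · right
      intro a b hab
      have hne : ∀ n : ℤ, 0 ≤ n → (hhF (c i) (θ i) n)⁻¹ ≠ 0 := fun n hn =>
        inv_ne_zero (ne_of_gt (hhF_pos (hc i) (hθpos i) hn))
      have hr : Tendsto (fun n : ℤ =>
          (hhF (c i) (θ i) (n + 1))⁻¹ / (hhF (c i) (θ i) n)⁻¹) atTop (nhds 0) := by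
        refine (hhF_ratio_zero (hc i) (hθ0 i) (hθpos i) hl).congr fun n => ?_
        rw [div_eq_mul_inv, div_eq_mul_inv, inv_inv, mul_comm]
      have hd := dom_of_gap (fun n => (hhF (c i) (θ i) n)⁻¹)
        (gap_tendsto _ hne hr) hab
      refine hd.congr fun n => ?_
      rw [div_eq_mul_inv, div_eq_mul_inv, inv_inv, mul_comm]
  have hzero := indepAux m hh hpos hdom S d hsum
  intro z hz
  have hzS : z ∈ S := by
    rcases hz with ⟨k, hk⟩ | ⟨k, hk⟩
    · exact Finset.mem_union_left _ (Finset.mem_image.mpr ⟨k, Finset.mem_univ k, hk⟩)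
    · exact Finset.mem_union_right _ (Finset.mem_image.mpr ⟨k, Finset.mem_univ k, hk⟩)
  have hdz : d z = 0 := hzero z hzS
  rw [hddef] at hdz
  exact sub_eq_zero.mp hdz
end

section
/- Consider a reaction network with rate constants κ_k and stochastic mass action intensity functions λ_k. Suppose that for some c ∈ ℝ^m_{>0} the product of Poisson distributions π(x) = ∏_{i=1}^m e^{−c_i} c_i^{x_i}/x_i! satisfies the stationarity equation ∑_{k=1}^K π(x − y_k' + y_k) λ_k(x − y_k' + y_k) = π(x) ∑_{k=1}^K λ_k(x) for every x ∈ ℤ^m_{≥0} (with π extended by 0 outside ℤ^m_{≥0}). Then c is a complex balanced equilibrium of the network: for every complex z ∈ C, ∑_{k : y_k' = z} κ_k c^{y_k} = ∑_{k : y_k = z} κ_k c^{y_k}. -/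
open Finset Filter

/-- Auxiliary function `w(z,x) = ∏_i 1/(x_i - z_i)!` if `z ≤ x`, else `0`. -/
noncomputable def wFun (m : ℕ) (z x : Fin m → ℕ) : ℝ :=
  if ∀ i, z i ≤ x i then ∏ i, (((x i - z i).factorial : ℝ))⁻¹ else 0

lemma wFun_self (m : ℕ) (z : Fin m → ℕ) : wFun m z z = 1 := by
  rw [wFun, if_pos (fun i => le_refl _)]
  simp

lemma rhs_term (m K : ℕ) (y : Fin K → Fin m → ℕ) (κ : Fin K → ℝ) (c : Fin m → ℝ)
    (x : Fin m → ℕ) (k : Fin K) :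
    poissonPi m c (fun i => (x i : ℤ)) * maIntensity m K y κ k (fun i => (x i : ℤ))
      = (∏ i, Real.exp (-c i) * c i ^ x i) * (κ k * wFun m (y k) x) := by
  rw [poissonPi, maIntensity, wFun, if_pos (fun i => Int.natCast_nonneg _)]
  by_cases hk : ∀ i, y k i ≤ x i
  · rw [if_pos (fun i => by exact_mod_cast hk i), if_pos hk]
    simp only [Int.toNat_natCast]
    rw [show (∏ i, Real.exp (-c i) * c i ^ x i) * (κ k * ∏ i, (((x i - y k i).factorial : ℝ))⁻¹)
        = κ k * ((∏ i, Real.exp (-c i) * c i ^ x i) * ∏ i, (((x i - y k i).factorial : ℝ))⁻¹) by ring,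
      ← Finset.prod_mul_distrib,
      show (∏ i, Real.exp (-c i) * c i ^ x i / ((x i).factorial : ℝ)) *
        (κ k * ∏ i, ((x i).factorial : ℝ) / (((x i - y k i).factorial : ℝ)))
        = κ k * ((∏ i, Real.exp (-c i) * c i ^ x i / ((x i).factorial : ℝ)) *
          ∏ i, ((x i).factorial : ℝ) / (((x i - y k i).factorial : ℝ))) by ring,
      ← Finset.prod_mul_distrib]
    congr 1
    refine Finset.prod_congr rfl fun i _ => ?_
    have h1 : (((x i).factorial : ℝ)) ≠ 0 := by exact_mod_cast (x i).factorial_ne_zero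
    have h2 : ((((x i - y k i).factorial : ℕ)) : ℝ) ≠ 0 := by
      exact_mod_cast (x i - y k i).factorial_ne_zero
    field_simp
  · rw [if_neg (fun h => hk (fun i => by exact_mod_cast h i)), if_neg hk]
    simp

lemma lhs_term (m K : ℕ) (y y' : Fin K → Fin m → ℕ) (κ : Fin K → ℝ) (c : Fin m → ℝ)
    (hc : ∀ i, 0 < c i) (x : Fin m → ℕ) (k : Fin K) :
    poissonPi m c (fun i => (x i : ℤ) - y' k i + y k i) *
        maIntensity m K y κ k (fun i => (x i : ℤ) - y' k i + y k i)
      = (∏ i, Real.exp (-c i) * c i ^ x i) *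
        ((κ k * ∏ i, c i ^ y k i / c i ^ y' k i) * wFun m (y' k) x) := by
  by_cases h : ∀ i, y' k i ≤ x i
  · have hpos : ∀ i, (0:ℤ) ≤ (x i : ℤ) - y' k i + y k i := fun i => by
      have := h i; omega
    have hle : ∀ i, (y k i : ℤ) ≤ (x i : ℤ) - y' k i + y k i := fun i => by
      have := h i; omega
    have htn : ∀ i, ((x i : ℤ) - y' k i + y k i).toNat = x i - y' k i + y k i := fun i => by
      have := h i; omega
    rw [poissonPi, maIntensity, wFun, if_pos hpos, if_pos hle, if_pos h]
    simp only [htn, Nat.add_sub_cancel]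
    rw [show (∏ i, Real.exp (-c i) * c i ^ x i) *
        ((κ k * ∏ i, c i ^ y k i / c i ^ y' k i) * ∏ i, (((x i - y' k i).factorial : ℝ))⁻¹)
        = κ k * ((∏ i, Real.exp (-c i) * c i ^ x i) *
          ((∏ i, c i ^ y k i / c i ^ y' k i) * ∏ i, (((x i - y' k i).factorial : ℝ))⁻¹)) by ring,
      ← Finset.prod_mul_distrib, ← Finset.prod_mul_distrib,
      show (∏ i, Real.exp (-c i) * c i ^ (x i - y' k i + y k i) /
          (((x i - y' k i + y k i).factorial : ℝ))) *
        (κ k * ∏ i, (((x i - y' k i + y k i).factorial : ℝ)) / (((x i - y' k i).factorial : ℝ)))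
        = κ k * ((∏ i, Real.exp (-c i) * c i ^ (x i - y' k i + y k i) /
          (((x i - y' k i + y k i).factorial : ℝ))) *
          ∏ i, (((x i - y' k i + y k i).factorial : ℝ)) / (((x i - y' k i).factorial : ℝ))) by ring,
      ← Finset.prod_mul_distrib]
    congr 1
    refine Finset.prod_congr rfl fun i _ => ?_
    obtain ⟨a, ha⟩ : ∃ a, x i = a + y' k i := ⟨x i - y' k i, (Nat.sub_add_cancel (h i)).symm⟩
    rw [ha]
    simp only [Nat.add_sub_cancel]
    have h1 : (((a + y k i).factorial : ℝ)) ≠ 0 := by exact_mod_cast (a + y k i).factorial_ne_zero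
    have h2 : ((a.factorial : ℕ) : ℝ) ≠ 0 := by exact_mod_cast a.factorial_ne_zero
    have h3 : c i ≠ 0 := ne_of_gt (hc i)
    rw [pow_add, pow_add]
    field_simp
  · push_neg at h
    obtain ⟨i0, hi0⟩ := h
    rw [maIntensity, if_neg, wFun, if_neg]
    · ring
    · push_neg; exact ⟨i0, by omega⟩
    · push_neg; exact ⟨i0, by omega⟩

lemma key_identity (m K : ℕ) (y y' : Fin K → Fin m → ℕ) (κ : Fin K → ℝ) (c : Fin m → ℝ)
    (hc : ∀ i, 0 < c i)
    (hstat : stationaryEq m K y y' (poissonPi m c) (maIntensity m K y κ))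
    (x : Fin m → ℕ) :
    ∑ k : Fin K, (κ k * ∏ i, c i ^ y k i / c i ^ y' k i) * wFun m (y' k) x
      = ∑ k : Fin K, κ k * wFun m (y k) x := by
  have h := hstat x
  have hC : (0:ℝ) < ∏ i, Real.exp (-c i) * c i ^ x i :=
    Finset.prod_pos fun i _ => mul_pos (Real.exp_pos _) (pow_pos (hc i) _)
  rw [Finset.mul_sum] at h
  calc ∑ k : Fin K, (κ k * ∏ i, c i ^ y k i / c i ^ y' k i) * wFun m (y' k) x
      = ((∏ i, Real.exp (-c i) * c i ^ x i)⁻¹) *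
          ∑ k : Fin K, (∏ i, Real.exp (-c i) * c i ^ x i) *
            ((κ k * ∏ i, c i ^ y k i / c i ^ y' k i) * wFun m (y' k) x) := by
        rw [← Finset.mul_sum, ← mul_assoc, inv_mul_cancel₀ (ne_of_gt hC), one_mul]
    _ = ((∏ i, Real.exp (-c i) * c i ^ x i)⁻¹) *
          ∑ k : Fin K, (∏ i, Real.exp (-c i) * c i ^ x i) * (κ k * wFun m (y k) x) := by
        congr 1
        rw [← Finset.sum_congr rfl fun k _ => lhs_term m K y y' κ c hc x k, h]
        exact Finset.sum_congr rfl fun k _ => rhs_term m K y κ c x k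
    _ = ∑ k : Fin K, κ k * wFun m (y k) x := by
        rw [← Finset.mul_sum, ← mul_assoc, inv_mul_cancel₀ (ne_of_gt hC), one_mul]

/-- (Cappelletti–Wiuf converse.) If the product of Poissons with
parameter `c` satisfies the stationarity equation for the stochastic mass action
model, then `c` is a complex balanced equilibrium. -/
theorem stmt8 (m K : ℕ) (y y' : Fin K → Fin m → ℕ) (κ : Fin K → ℝ) (c : Fin m → ℝ)
    (hyy' : ∀ k, y k ≠ y' k) (hκ : ∀ k, 0 < κ k) (hc : ∀ i, 0 < c i)
    (hstat : stationaryEq m K y y' (poissonPi m c) (maIntensity m K y κ)) :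
    complexBalanced m K y y' κ c := by
  set α : Fin K → ℝ := fun k => κ k * ∏ i, c i ^ y k i / c i ^ y' k i with hα
  set S : Finset (Fin m → ℕ) := (Finset.univ.image y) ∪ (Finset.univ.image y') with hS
  set D : (Fin m → ℕ) → ℝ := fun z =>
    (∑ k ∈ Finset.univ.filter (fun k => y' k = z), α k) -
    (∑ k ∈ Finset.univ.filter (fun k => y k = z), κ k) with hD
  -- The grouped identity
  have hgroup : ∀ x : Fin m → ℕ, ∑ z ∈ S, D z * wFun m z x = 0 := by
    intro x
    have h1 : ∑ z ∈ S, (∑ k ∈ Finset.univ.filter (fun k => y' k = z), α k) * wFun m z x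
        = ∑ k : Fin K, α k * wFun m (y' k) x := by
      rw [show ∑ z ∈ S, (∑ k ∈ Finset.univ.filter (fun k => y' k = z), α k) * wFun m z x
          = ∑ z ∈ S, ∑ k ∈ Finset.univ.filter (fun k => y' k = z), α k * wFun m (y' k) x from
        Finset.sum_congr rfl fun z hz => by
          rw [Finset.sum_mul]
          exact Finset.sum_congr rfl fun k hk => by
            rw [(Finset.mem_filter.mp hk).2]]
      exact Finset.sum_fiberwise_of_maps_to (fun k _ => by
        simp [hS, Finset.mem_union, Finset.mem_image]) _
    have h2 : ∑ z ∈ S, (∑ k ∈ Finset.univ.filter (fun k => y k = z), κ k) * wFun m z x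
        = ∑ k : Fin K, κ k * wFun m (y k) x := by
      rw [show ∑ z ∈ S, (∑ k ∈ Finset.univ.filter (fun k => y k = z), κ k) * wFun m z x
          = ∑ z ∈ S, ∑ k ∈ Finset.univ.filter (fun k => y k = z), κ k * wFun m (y k) x from
        Finset.sum_congr rfl fun z hz => by
          rw [Finset.sum_mul]
          exact Finset.sum_congr rfl fun k hk => by
            rw [(Finset.mem_filter.mp hk).2]]
      exact Finset.sum_fiberwise_of_maps_to (fun k _ => by
        simp [hS, Finset.mem_union, Finset.mem_image]) _
    have := key_identity m K y y' κ c hc hstat x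
    calc ∑ z ∈ S, D z * wFun m z x
        = ∑ z ∈ S, ((∑ k ∈ Finset.univ.filter (fun k => y' k = z), α k) * wFun m z x
            - (∑ k ∈ Finset.univ.filter (fun k => y k = z), κ k) * wFun m z x) := by
          exact Finset.sum_congr rfl fun z _ => by rw [hD]; ring
      _ = 0 := by rw [Finset.sum_sub_distrib, h1, h2, this, sub_self]
  -- vanishing of coefficients by strong induction on the size of z
  have hvanish : ∀ n : ℕ, ∀ z ∈ S, (∑ i, z i) < n → D z = 0 := by
    intro n
    induction n with
    | zero => intro z _ hlt; omega
    | succ n ih =>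
      intro z hz hlt
      have hside : ∀ b ∈ S, b ≠ z → D b * wFun m b z = 0 := by
        intro b hb hne
        by_cases hble : ∀ i, b i ≤ z i
        · have hex : ∃ i, b i < z i := by
            by_contra hcon
            push_neg at hcon
            exact hne (funext fun i => le_antisymm (hble i) (hcon i))
          obtain ⟨i0, hi0⟩ := hex
          have hlt2 : ∑ i, b i < ∑ i, z i :=
            Finset.sum_lt_sum (fun i _ => hble i) ⟨i0, Finset.mem_univ _, hi0⟩
          rw [ih b hb (by omega), zero_mul]
        · rw [wFun, if_neg hble, mul_zero]
      have h0 := hgroup z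
      rw [Finset.sum_eq_single_of_mem z hz hside, wFun_self, mul_one] at h0
      exact h0
  -- conclude
  intro z hex
  have hzS : z ∈ S := by
    rcases hex with ⟨k, hk⟩ | ⟨k, hk⟩
    · exact Finset.mem_union_left _ (Finset.mem_image.mpr ⟨k, Finset.mem_univ _, hk⟩)
    · exact Finset.mem_union_right _ (Finset.mem_image.mpr ⟨k, Finset.mem_univ _, hk⟩)
  have hDz : D z = 0 := hvanish ((∑ i, z i) + 1) z hzS (by omega)
  have hcz : (∏ i, c i ^ z i) ≠ 0 :=
    ne_of_gt (Finset.prod_pos fun i _ => pow_pos (hc i) _)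
  have heq : (∑ k ∈ Finset.univ.filter (fun k => y' k = z), α k)
      = ∑ k ∈ Finset.univ.filter (fun k => y k = z), κ k := by
    have := hDz
    rw [hD] at this
    linarith [sub_eq_zero.mp this]
  have h1 : ∑ k ∈ Finset.univ.filter (fun k => y' k = z), κ k * ∏ i, c i ^ y k i
      = (∏ i, c i ^ z i) * ∑ k ∈ Finset.univ.filter (fun k => y' k = z), α k := by
    rw [Finset.mul_sum]
    refine Finset.sum_congr rfl fun k hk => ?_
    have hk' := (Finset.mem_filter.mp hk).2
    rw [hα]
    simp only [hk']
    rw [Finset.prod_div_distrib]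
    field_simp
    try ring
  have h2 : ∑ k ∈ Finset.univ.filter (fun k => y k = z), κ k * ∏ i, c i ^ y k i
      = (∏ i, c i ^ z i) * ∑ k ∈ Finset.univ.filter (fun k => y k = z), κ k := by
    rw [Finset.mul_sum]
    refine Finset.sum_congr rfl fun k hk => ?_
    have hk' := (Finset.mem_filter.mp hk).2
    rw [hk']
    ring
  rw [h1, h2, heq]
end

section
/- Suppose c ∈ ℝ^m_{>0} is a complex balanced equilibrium of a reaction network with rate constants κ_k. For V > 0 define scaled rate constants κ_k^V = κ_k / V^{|y_k| − 1}, where |y_k| = ∑_i y_{ki}, and scaled mass action intensities λ_k^V(x) = κ_k^V ∏_{i=1}^m x_i!/(x_i − y_{ki})! (for x_i ≥ y_{ki} for all i, and 0 otherwise). Then π^V(x) = ∏_{i=1}^m e^{−V c_i} (V c_i)^{x_i}/x_i! is a stationary distribution: for every x ∈ ℤ^m_{≥0}, ∑_{k=1}^K π^V(x − y_k' + y_k) λ_k^V(x − y_k' + y_k) = π^V(x) ∑_{k=1}^K λ_k^V(x), and ∑_{x ∈ ℤ^m_{≥0}} π^V(x) = 1. -/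
open Finset Filter

/-! ### Auxiliary lemmas for `stmt9` -/

private lemma keyB_aux (m K : ℕ) (y : Fin K → Fin m → ℕ) (κ : Fin K → ℝ) (c : Fin m → ℝ)
    (k : Fin K) (x : Fin m → ℤ) :
    poissonPi m c x * maIntensity m K y κ k x
      = κ k * (∏ i, c i ^ y k i) * poissonPi m c (fun i => x i - y k i) := by
  by_cases h : ∀ i, (y k i : ℤ) ≤ x i
  · have hx : ∀ i, 0 ≤ x i := fun i => le_trans (by positivity) (h i)
    have hx2 : ∀ i, 0 ≤ x i - y k i := fun i => sub_nonneg.2 (h i)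
    rw [poissonPi, if_pos hx, maIntensity, if_pos h, poissonPi, if_pos hx2]
    have key : ∀ i, (Real.exp (-c i) * c i ^ (x i).toNat / ((x i).toNat.factorial : ℝ)) *
        (((x i).toNat.factorial : ℝ) / (((x i).toNat - y k i).factorial : ℝ))
        = c i ^ y k i *
          (Real.exp (-c i) * c i ^ ((x i - y k i).toNat) / (((x i - y k i).toNat.factorial : ℝ))) := by
      intro i
      have hxi := h i
      have hxi2 := hx i
      have hle : y k i ≤ (x i).toNat := by omega
      have ht : (x i - y k i).toNat = (x i).toNat - y k i := by omega
      rw [ht]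
      have hpow : c i ^ (x i).toNat = c i ^ y k i * c i ^ ((x i).toNat - y k i) := by
        rw [← pow_add]; congr 1; omega
      have h1 : ((x i).toNat.factorial : ℝ) ≠ 0 := Nat.cast_ne_zero.2 (Nat.factorial_ne_zero _)
      have h2 : (((x i).toNat - y k i).factorial : ℝ) ≠ 0 := Nat.cast_ne_zero.2 (Nat.factorial_ne_zero _)
      field_simp
      rw [hpow]
    calc (∏ i, Real.exp (-c i) * c i ^ (x i).toNat / ((x i).toNat.factorial : ℝ)) *
          (κ k * ∏ i, ((x i).toNat.factorial : ℝ) / (((x i).toNat - y k i).factorial : ℝ))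
        = κ k * ∏ i, (Real.exp (-c i) * c i ^ (x i).toNat / ((x i).toNat.factorial : ℝ)) *
            (((x i).toNat.factorial : ℝ) / (((x i).toNat - y k i).factorial : ℝ)) := by
          rw [Finset.prod_mul_distrib]; ring
      _ = κ k * ∏ i, c i ^ y k i *
            (Real.exp (-c i) * c i ^ ((x i - y k i).toNat) / (((x i - y k i).toNat.factorial : ℝ))) := by
          rw [Finset.prod_congr rfl fun i _ => key i]
      _ = κ k * (∏ i, c i ^ y k i) *
            ∏ i, Real.exp (-c i) * c i ^ ((x i - y k i).toNat) / (((x i - y k i).toNat.factorial : ℝ)) := by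
          rw [Finset.prod_mul_distrib]; ring
  · rw [maIntensity, if_neg h, mul_zero]
    push_neg at h
    obtain ⟨i, hi⟩ := h
    have h0 : poissonPi m c (fun i => x i - y k i) = 0 := by
      rw [poissonPi, if_neg]
      push_neg
      exact ⟨i, by omega⟩
    rw [h0, mul_zero]

private lemma statGen_aux (m K : ℕ) (y y' : Fin K → Fin m → ℕ) (κ : Fin K → ℝ) (c : Fin m → ℝ)
    (hcb : complexBalanced m K y y' κ c) :
    stationaryEq m K y y' (poissonPi m c) (maIntensity m K y κ) := by
  intro x
  set S : Finset (Fin m → ℕ) := (Finset.univ.image y) ∪ (Finset.univ.image y') with hS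
  have hmem : ∀ z ∈ S, (∃ k, y k = z) ∨ (∃ k, y' k = z) := by
    intro z hz
    simp only [hS, Finset.mem_union, Finset.mem_image, Finset.mem_univ, true_and] at hz
    exact hz
  calc ∑ k : Fin K, poissonPi m c (fun i => (x i : ℤ) - y' k i + y k i) *
        maIntensity m K y κ k (fun i => (x i : ℤ) - y' k i + y k i)
      = ∑ k : Fin K, κ k * (∏ i, c i ^ y k i) *
          poissonPi m c (fun i => (x i : ℤ) - y' k i) := by
        refine Finset.sum_congr rfl fun k _ => ?_
        have := keyB_aux m K y κ c k (fun i => (x i : ℤ) - y' k i + y k i)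
        simpa using this
    _ = ∑ z ∈ S, ∑ k ∈ Finset.univ.filter (fun k => y' k = z),
          κ k * (∏ i, c i ^ y k i) * poissonPi m c (fun i => (x i : ℤ) - y' k i) := by
        rw [Finset.sum_fiberwise_of_maps_to (fun k _ => by
          simp [hS, Finset.mem_union, Finset.mem_image])]
    _ = ∑ z ∈ S, poissonPi m c (fun i => (x i : ℤ) - z i) *
          ∑ k ∈ Finset.univ.filter (fun k => y' k = z), κ k * ∏ i, c i ^ y k i := by
        refine Finset.sum_congr rfl fun z hz => ?_
        rw [Finset.mul_sum]
        refine Finset.sum_congr rfl fun k hk => ?_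
        simp only [Finset.mem_filter] at hk
        rw [← hk.2]; ring
    _ = ∑ z ∈ S, poissonPi m c (fun i => (x i : ℤ) - z i) *
          ∑ k ∈ Finset.univ.filter (fun k => y k = z), κ k * ∏ i, c i ^ y k i := by
        refine Finset.sum_congr rfl fun z hz => ?_
        rw [hcb z (hmem z hz)]
    _ = ∑ z ∈ S, ∑ k ∈ Finset.univ.filter (fun k => y k = z),
          κ k * (∏ i, c i ^ y k i) * poissonPi m c (fun i => (x i : ℤ) - y k i) := by
        refine Finset.sum_congr rfl fun z hz => ?_
        rw [Finset.mul_sum]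
        refine Finset.sum_congr rfl fun k hk => ?_
        simp only [Finset.mem_filter] at hk
        rw [← hk.2]; ring
    _ = ∑ k : Fin K, κ k * (∏ i, c i ^ y k i) *
          poissonPi m c (fun i => (x i : ℤ) - y k i) := by
        rw [Finset.sum_fiberwise_of_maps_to (fun k _ => by
          simp [hS, Finset.mem_union, Finset.mem_image])]
    _ = ∑ k : Fin K, poissonPi m c (fun i => (x i : ℤ)) *
          maIntensity m K y κ k (fun i => (x i : ℤ)) := by
        refine Finset.sum_congr rfl fun k _ => ?_
        rw [keyB_aux]
    _ = poissonPi m c (fun i => (x i : ℤ)) *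
          ∑ k : Fin K, maIntensity m K y κ k (fun i => (x i : ℤ)) := by
        rw [Finset.mul_sum]

private lemma cbScaled_aux (m K : ℕ) (y y' : Fin K → Fin m → ℕ) (κ : Fin K → ℝ) (c : Fin m → ℝ)
    (hcb : complexBalanced m K y y' κ c) (V : ℝ) (hV : 0 < V) :
    complexBalanced m K y y' (fun k => κ k / V ^ (((∑ i, y k i : ℕ) : ℤ) - 1))
      (fun i => V * c i) := by
  have hterm : ∀ k : Fin K, (κ k / V ^ (((∑ i, y k i : ℕ) : ℤ) - 1)) *
      ∏ i, (V * c i) ^ y k i = V * (κ k * ∏ i, c i ^ y k i) := by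
    intro k
    have h1 : ∏ i, (V * c i) ^ y k i = V ^ (∑ i, y k i) * ∏ i, c i ^ y k i := by
      simp_rw [mul_pow, Finset.prod_mul_distrib, Finset.prod_pow_eq_pow_sum]
    have h2 : V ^ (((∑ i, y k i : ℕ) : ℤ) - 1) = V ^ (∑ i, y k i) / V := by
      rw [zpow_sub₀ (ne_of_gt hV), zpow_one, zpow_natCast]
    rw [h1, h2]
    have h3 : V ^ (∑ i, y k i) ≠ 0 := by positivity
    field_simp
  intro z hz
  have h := hcb z hz
  calc ∑ k ∈ Finset.univ.filter (fun k => y' k = z),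
        (κ k / V ^ (((∑ i, y k i : ℕ) : ℤ) - 1)) * ∏ i, (V * c i) ^ y k i
      = ∑ k ∈ Finset.univ.filter (fun k => y' k = z), V * (κ k * ∏ i, c i ^ y k i) :=
        Finset.sum_congr rfl fun k _ => hterm k
    _ = V * ∑ k ∈ Finset.univ.filter (fun k => y' k = z), κ k * ∏ i, c i ^ y k i := by
        rw [Finset.mul_sum]
    _ = V * ∑ k ∈ Finset.univ.filter (fun k => y k = z), κ k * ∏ i, c i ^ y k i := by rw [h]
    _ = ∑ k ∈ Finset.univ.filter (fun k => y k = z), V * (κ k * ∏ i, c i ^ y k i) := by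
        rw [Finset.mul_sum]
    _ = _ := Finset.sum_congr rfl fun k _ => (hterm k).symm

private lemma hasSum_mul_pi_aux {n : ℕ} (f0 : ℕ → ℝ) (g : (Fin n → ℕ) → ℝ) (a0 b : ℝ)
    (h0 : HasSum f0 a0) (hg : HasSum g b) (h0' : ∀ k, 0 ≤ f0 k) (hg' : ∀ x, 0 ≤ g x) :
    HasSum (fun p : ℕ × (Fin n → ℕ) => f0 p.1 * g p.2) (a0 * b) :=
  HasSum.mul h0 hg (Summable.mul_of_nonneg h0.summable hg.summable h0' hg')

private lemma hasSum_pi_prod_aux : ∀ (m : ℕ) (f : Fin m → ℕ → ℝ) (a : Fin m → ℝ),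
    (∀ i n, 0 ≤ f i n) → (∀ i, HasSum (f i) (a i)) →
    HasSum (fun x : Fin m → ℕ => ∏ i, f i (x i)) (∏ i, a i) := by
  intro m
  induction m with
  | zero =>
    intro f a _ _
    simp only [Finset.univ_eq_empty, Finset.prod_empty]
    exact hasSum_single (default : Fin 0 → ℕ) (fun b hb => absurd (Subsingleton.elim b default) hb)
  | succ n ih =>
    intro f a hpos hsum
    have ihn : HasSum (fun x : Fin n → ℕ => ∏ i : Fin n, f i.succ (x i))
        (∏ i : Fin n, a i.succ) :=
      ih (fun i => f i.succ) (fun i => a i.succ) (fun i n => hpos i.succ n)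
        (fun i => hsum i.succ)
    have hmul := hasSum_mul_pi_aux (f 0) (fun x : Fin n → ℕ => ∏ i : Fin n, f i.succ (x i))
      (a 0) (∏ i : Fin n, a i.succ) (hsum 0) ihn (hpos 0)
      (fun x => Finset.prod_nonneg fun i _ => hpos i.succ (x i))
    have hcomp : ((fun x : Fin (n+1) → ℕ => ∏ i, f i (x i)) ∘ (Fin.consEquiv (fun _ => ℕ)))
        = fun p : ℕ × (Fin n → ℕ) => f 0 p.1 * ∏ i : Fin n, f i.succ (p.2 i) := by
      funext p
      simp only [Function.comp_apply, Fin.consEquiv_apply, Fin.prod_univ_succ,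
        Fin.cons_zero, Fin.cons_succ]
    rw [Fin.prod_univ_succ a]
    exact (Equiv.hasSum_iff (Fin.consEquiv (fun _ => ℕ))).1 (by rw [hcomp]; exact hmul)

/-- (Classical scaling.) If `c` is a complex balanced equilibrium,
then for every `V > 0` the product of Poissons with parameter `V c` is a stationary
distribution for the mass action model with scaled rate constants
`κ_k^V = κ_k / V^{|y_k| - 1}`, and it has total mass `1`. -/
theorem stmt9 (m K : ℕ) (y y' : Fin K → Fin m → ℕ) (κ : Fin K → ℝ) (c : Fin m → ℝ)
    (hyy' : ∀ k, y k ≠ y' k) (hκ : ∀ k, 0 < κ k) (hc : ∀ i, 0 < c i)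
    (hcb : complexBalanced m K y y' κ c)
    (V : ℝ) (hV : 0 < V) :
    stationaryEq m K y y' (poissonPi m (fun i => V * c i))
      (maIntensity m K y (fun k => κ k / V ^ (((∑ i, y k i : ℕ) : ℤ) - 1))) ∧
      ∑' x : Fin m → ℕ, poissonPi m (fun i => V * c i) (fun i => (x i : ℤ)) = 1 := by
  constructor
  · exact statGen_aux m K y y' _ (fun i => V * c i)
      (cbScaled_aux m K y y' κ c hcb V hV)
  · have hp : ∀ i : Fin m, HasSum
        (fun n : ℕ => Real.exp (-(V * c i)) * (V * c i) ^ n / (n.factorial : ℝ)) 1 := by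
      intro i
      have h := ProbabilityTheory.poissonPMFRealSum ⟨V * c i, mul_nonneg hV.le (hc i).le⟩
      exact h
    have hs := hasSum_pi_prod_aux m
      (fun i n => Real.exp (-(V * c i)) * (V * c i) ^ n / (n.factorial : ℝ))
      (fun _ => 1) (fun i n => div_nonneg (mul_nonneg (Real.exp_nonneg _)
        (pow_nonneg (mul_nonneg hV.le (hc i).le) _)) (Nat.cast_nonneg _)) hp
    have hfun : (fun x : Fin m → ℕ => poissonPi m (fun i => V * c i) (fun i => (x i : ℤ)))
        = fun x : Fin m → ℕ =>
            ∏ i, Real.exp (-(V * c i)) * (V * c i) ^ (x i) / ((x i).factorial : ℝ) := by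
      funext x
      rw [poissonPi, if_pos (fun i => Int.natCast_nonneg _)]
      simp
    rw [hfun]
    simpa using hs.tsum_eq
end

section
/- Let c ∈ ℝ^m_{>0}, and for V > 0 let π^V(x) = ∏_{i=1}^m e^{−V c_i} (V c_i)^{x_i}/x_i! for x ∈ ℤ^m_{≥0}. Let V_n > 0 with V_n → ∞ and x_n ∈ ℤ^m_{≥0} be such that x_n / V_n → x̃ ∈ ℝ^m_{>0}. Then lim_{n→∞} [ −(1/V_n) ln π^{V_n}(x_n) ] = 𝒱(x̃), where 𝒱(x̃) = ∑_{i=1}^m [ x̃_i (ln x̃_i − ln c_i − 1) + c_i ] is the standard Lyapunov function of chemical reaction network theory. -/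
open Finset Filter

lemma rfact_div :
    Tendsto (fun k : ℕ => (Real.log (k.factorial) - ((k : ℝ) * Real.log k - k)) / k)
      atTop (nhds 0) := by
  have hg : Tendsto (fun y : ℝ => Real.log y / y) atTop (nhds 0) := by
    simpa using Real.tendsto_pow_log_div_mul_add_atTop 1 0 1 one_ne_zero
  have h1 : Tendsto (fun k : ℕ => Real.log (Stirling.stirlingSeq k) / k) atTop (nhds 0) := by
    have hlog : Tendsto (fun k : ℕ => Real.log (Stirling.stirlingSeq k)) atTop
        (nhds (Real.log (Real.sqrt Real.pi))) :=
      (Real.continuousAt_log (by positivity)).tendsto.comp Stirling.tendsto_stirlingSeq_sqrt_pi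
    exact hlog.div_atTop tendsto_natCast_atTop_atTop
  have h2 : Tendsto (fun k : ℕ => 1 / 2 * Real.log (2 * k) / k) atTop (nhds 0) := by
    have hcomp : Tendsto (fun k : ℕ => (2 : ℝ) * k) atTop atTop :=
      tendsto_natCast_atTop_atTop.const_mul_atTop two_pos
    have h2' : Tendsto (fun k : ℕ => Real.log (2 * k) / (2 * k)) atTop (nhds 0) :=
      hg.comp hcomp
    refine h2'.congr' ?_
    filter_upwards [eventually_ge_atTop 1] with k hk
    have hk' : (0:ℝ) < (k : ℝ) := by exact_mod_cast hk
    field_simp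
  have := h1.add h2
  rw [add_zero] at this
  refine this.congr' ?_
  filter_upwards [eventually_ge_atTop 1] with k hk
  have hk' : (0:ℝ) < (k : ℝ) := by exact_mod_cast hk
  have hform := Stirling.log_stirlingSeq_formula k
  have hke : Real.log ((k : ℝ) / Real.exp 1) = Real.log k - 1 := by
    rw [Real.log_div hk'.ne' (Real.exp_ne_zero 1), Real.log_exp]
  rw [hform, hke]
  ring

lemma key_coord (c : ℝ) (hc : 0 < c) (V : ℕ → ℝ) (hV : ∀ n, 0 < V n)
    (hVlim : Tendsto V atTop atTop) (x : ℕ → ℕ) (xt : ℝ) (hxt : 0 < xt)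
    (hx : Tendsto (fun n => (x n : ℝ) / V n) atTop (nhds xt)) :
    Tendsto (fun n => -(1 / V n) * Real.log
      (Real.exp (-(V n * c)) * (V n * c) ^ (x n) / ((x n).factorial : ℝ)))
      atTop (nhds (xt * (Real.log xt - Real.log c - 1) + c)) := by
  -- x n → ∞
  have hxR : Tendsto (fun n => (x n : ℝ)) atTop atTop := by
    have := hx.pos_mul_atTop hxt hVlim
    refine this.congr' ?_
    filter_upwards [hVlim.eventually_gt_atTop 0] with n hn
    field_simp
  have hxN : Tendsto x atTop atTop := by
    rwa [tendsto_natCast_atTop_iff] at hxR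
  -- remainder term
  set r : ℕ → ℝ := fun k => Real.log (k.factorial) - ((k : ℝ) * Real.log k - k) with hr_def
  have hr : Tendsto (fun n => r (x n) / (x n)) atTop (nhds 0) := rfact_div.comp hxN
  have hrV : Tendsto (fun n => r (x n) / V n) atTop (nhds 0) := by
    have := hr.mul hx
    rw [zero_mul] at this
    refine this.congr' ?_
    filter_upwards [hxN.eventually_ge_atTop 1] with n hn
    have hX : (0:ℝ) < (x n : ℝ) := by exact_mod_cast hn
    field_simp
  -- log(x/V) → log xt
  have hlog : Tendsto (fun n => Real.log ((x n : ℝ) / V n)) atTop (nhds (Real.log xt)) :=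
    (Real.continuousAt_log hxt.ne').tendsto.comp hx
  have hmain : Tendsto (fun n =>
      c - ((x n : ℝ) / V n) * Real.log c + ((x n : ℝ) / V n) * Real.log ((x n : ℝ) / V n)
        - (x n : ℝ) / V n + r (x n) / V n) atTop
      (nhds (c - xt * Real.log c + xt * Real.log xt - xt + 0)) := by
    exact ((((tendsto_const_nhds.sub (hx.mul_const _)).add (hx.mul hlog)).sub hx).add hrV)
  rw [add_zero] at hmain
  have hEq : (c - xt * Real.log c + xt * Real.log xt - xt) =
      xt * (Real.log xt - Real.log c - 1) + c := by ring
  rw [hEq] at hmain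
  refine hmain.congr' ?_
  filter_upwards [hxN.eventually_ge_atTop 1] with n hn
  have hVn : (0:ℝ) < V n := hV n
  have hX : (0:ℝ) < (x n : ℝ) := by exact_mod_cast hn
  have hF : (0:ℝ) < ((x n).factorial : ℝ) := by exact_mod_cast (x n).factorial_pos
  have hVc : (0:ℝ) < V n * c := mul_pos hVn hc
  have hlog1 : Real.log (Real.exp (-(V n * c)) * (V n * c) ^ (x n) / ((x n).factorial : ℝ))
      = -(V n * c) + (x n : ℝ) * Real.log (V n * c) - Real.log ((x n).factorial : ℝ) := by
    rw [Real.log_div (by positivity) hF.ne', Real.log_mul (Real.exp_ne_zero _) (by positivity),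
      Real.log_exp, Real.log_pow]
  rw [hlog1, Real.log_mul hVn.ne' hc.ne', Real.log_div hX.ne' hVn.ne']
  simp only [hr_def]
  field_simp
  ring

/-- (Anderson–Craciun–Gopalkrishnan–Wiuf.) Under the classical
scaling, the scaled non-equilibrium potential of the product-Poisson stationary
distribution `π^V(x) = ∏_i e^{-V c_i}(V c_i)^{x_i}/x_i!` converges, along any sequence
`V_n → ∞`, `x_n / V_n → x̃ ∈ ℝ^m_{>0}`, to the standard Lyapunov function
`𝒱(x̃) = ∑_i [x̃_i(ln x̃_i - ln c_i - 1) + c_i]`. -/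
theorem stmt10 (m : ℕ) (c : Fin m → ℝ) (hc : ∀ i, 0 < c i)
    (V : ℕ → ℝ) (hV : ∀ n, 0 < V n)
    (hVlim : Filter.Tendsto V Filter.atTop Filter.atTop)
    (x : ℕ → Fin m → ℕ) (xt : Fin m → ℝ) (hxt : ∀ i, 0 < xt i)
    (hx : ∀ i, Filter.Tendsto (fun n => (x n i : ℝ) / V n) Filter.atTop (nhds (xt i))) :
    Filter.Tendsto
      (fun n => -(1 / V n) * Real.log
        (∏ i, Real.exp (-(V n * c i)) * (V n * c i) ^ (x n i) / ((x n i).factorial : ℝ)))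
      Filter.atTop
      (nhds (∑ i, (xt i * (Real.log (xt i) - Real.log (c i) - 1) + c i))) := by
  have hsum : Tendsto (fun n => ∑ i, -(1 / V n) * Real.log
      (Real.exp (-(V n * c i)) * (V n * c i) ^ (x n i) / ((x n i).factorial : ℝ)))
      atTop (nhds (∑ i, (xt i * (Real.log (xt i) - Real.log (c i) - 1) + c i))) := by
    exact tendsto_finset_sum _ fun i _ =>
      key_coord (c i) (hc i) V hV hVlim (fun n => x n i) (xt i) (hxt i) (hx i)
  refine hsum.congr fun n => ?_
  rw [Real.log_prod]
  · rw [Finset.mul_sum]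
  · intro i _
    have hVn := hV n
    have hci := hc i
    have hF : (0:ℝ) < ((x n i).factorial : ℝ) := by exact_mod_cast (x n i).factorial_pos
    have hVc : (0:ℝ) < V n * c i := mul_pos hVn hci
    positivity
end

section
/- Suppose c ∈ ℝ^m_{>0} is a complex balanced equilibrium of a reaction network with rate constants κ_k. Let θ_i : ℤ → ℝ_{≥0} satisfy θ_i(x) = 0 for x ≤ 0 and θ_i(j) > 0 for all integers j ≥ 1. Fix d ∈ ℝ^m and V > 0, and define scaled rate constants κ_k^V = κ_k / V^{d·y_k − 1} and scaled intensities λ_k^V(x) = κ_k^V ∏_{i=1}^m ∏_{j=0}^{y_{ki}−1} θ_i(x_i − j). Then π_*^V(x) = ∏_{i=1}^m (V^{d_i} c_i)^{x_i} / ∏_{j=1}^{x_i} θ_i(j) (extended by 0 outside ℤ^m_{≥0}) is a stationary measure: for every x ∈ ℤ^m_{≥0}, ∑_{k=1}^K π_*^V(x − y_k' + y_k) λ_k^V(x − y_k' + y_k) = π_*^V(x) ∑_{k=1}^K λ_k^V(x). -/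
open Finset Filter

private lemma prodSplit (θ : ℤ → ℝ) (a b : ℕ) (h : b ≤ a) :
    (∏ j ∈ Finset.range b, θ ((a : ℤ) - j)) * ∏ j ∈ Finset.range (a - b), θ (j + 1)
      = ∏ j ∈ Finset.range a, θ (j + 1) := by
  induction b with
  | zero => simp
  | succ b ih =>
    have hb : b ≤ a := by omega
    have h1 : a - b = (a - (b + 1)) + 1 := by omega
    have h2 : (((a - (b+1) : ℕ) : ℤ) + 1) = (a : ℤ) - b := by
      have : (b:ℤ) + 1 ≤ a := by exact_mod_cast h
      push_cast [Nat.cast_sub h]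
      ring
    calc (∏ j ∈ Finset.range (b+1), θ ((a : ℤ) - j)) * ∏ j ∈ Finset.range (a - (b+1)), θ (j + 1)
        = ((∏ j ∈ Finset.range b, θ ((a : ℤ) - j)) *
            ((∏ j ∈ Finset.range (a - (b+1)), θ (j + 1)) * θ (((a - (b+1) : ℕ) : ℤ) + 1))) := by
          rw [Finset.prod_range_succ]; rw [h2]; ring
      _ = (∏ j ∈ Finset.range b, θ ((a : ℤ) - j)) * ∏ j ∈ Finset.range (a - b), θ (j + 1) := by
          rw [h1, Finset.prod_range_succ]
      _ = _ := ih hb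

private lemma comp_lemma (c : ℝ) (θ : ℤ → ℝ) (hθpos : ∀ j : ℤ, 1 ≤ j → 0 < θ j)
    (a b : ℕ) (h : b ≤ a) :
    (c ^ a / ∏ j ∈ Finset.range a, θ (j + 1)) * ∏ j ∈ Finset.range b, θ ((a : ℤ) - j)
      = c ^ b * (c ^ (a - b) / ∏ j ∈ Finset.range (a - b), θ (j + 1)) := by
  have hD : ∀ n : ℕ, (∏ j ∈ Finset.range n, θ (j + 1)) ≠ 0 := by
    intro n
    refine (Finset.prod_pos fun j _ => hθpos _ (by omega)).ne'
  have hPb : (∏ j ∈ Finset.range b, θ ((a : ℤ) - j)) ≠ 0 := by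
    refine (Finset.prod_pos fun j hj => hθpos _ ?_).ne'
    have := Finset.mem_range.mp hj
    omega
  have hc : c ^ a = c ^ b * c ^ (a - b) := by rw [← pow_add]; congr 1; omega
  rw [hc, ← prodSplit θ a b h]
  field_simp

private lemma key_lemma (m : ℕ) (cV : Fin m → ℝ) (θ : Fin m → ℤ → ℝ)
    (hθ0 : ∀ i, ∀ x : ℤ, x ≤ 0 → θ i x = 0)
    (hθpos : ∀ i, ∀ j : ℤ, 1 ≤ j → 0 < θ i j)
    (x : Fin m → ℤ) (z : Fin m → ℕ) :
    prodForm m cV θ x * ∏ i, ∏ j ∈ Finset.range (z i), θ i (x i - j)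
      = (∏ i, cV i ^ z i) * prodForm m cV θ (fun i => x i - z i) := by
  by_cases h1 : ∀ i, 0 ≤ x i - (z i : ℤ)
  · have h2 : ∀ i, 0 ≤ x i := fun i => le_trans (Int.ofNat_nonneg (z i)) ((sub_nonneg.mp (h1 i)))
    simp only [prodForm]
    rw [if_pos h2, if_pos h1, ← Finset.prod_mul_distrib, ← Finset.prod_mul_distrib]
    refine Finset.prod_congr rfl fun i _ => ?_
    have h1i := h1 i
    have h2i := h2 i
    have ha : ((x i).toNat : ℤ) = x i := Int.toNat_of_nonneg (h2 i)
    have hb : z i ≤ (x i).toNat := by omega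
    have ht : (x i - z i).toNat = (x i).toNat - z i := by omega
    rw [ht, ← ha]
    exact comp_lemma (cV i) (θ i) (hθpos i) _ _ hb
  · have hz0 : prodForm m cV θ (fun i => x i - (z i : ℤ)) = 0 := by
      simp only [prodForm]; rw [if_neg h1]
    rw [hz0, mul_zero]
    by_cases h2 : ∀ i, 0 ≤ x i
    · push_neg at h1
      obtain ⟨i, hi⟩ := h1
      have h2i := h2 i
      have hlt : (x i).toNat < z i := by omega
      have : (∏ j ∈ Finset.range (z i), θ i (x i - j)) = 0 := by
        refine Finset.prod_eq_zero (Finset.mem_range.mpr hlt) ?_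
        have hx0 : x i - ((x i).toNat : ℤ) = 0 := by omega
        rw [hx0]; exact hθ0 i 0 le_rfl
      rw [Finset.prod_eq_zero (Finset.mem_univ i) this, mul_zero]
    · rw [prodForm, if_neg h2, zero_mul]


/-- (Modified scaling, stationary measure.) If `c` is a complex
balanced equilibrium, then for any `d ∈ ℝ^m` and `V > 0`, the measure
`π_*^V(x) = ∏_i (V^{d_i} c_i)^{x_i} / ∏_{j=1}^{x_i} θ_i(j)` satisfies the stationarity
equation for the model with scaled rate constants `κ_k^V = κ_k / V^{d·y_k - 1}`. -/
theorem stmt11 (m K : ℕ) (y y' : Fin K → Fin m → ℕ) (κ : Fin K → ℝ)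
    (c : Fin m → ℝ) (θ : Fin m → ℤ → ℝ)
    (hyy' : ∀ k, y k ≠ y' k) (hκ : ∀ k, 0 < κ k) (hc : ∀ i, 0 < c i)
    (hθnn : ∀ i x, 0 ≤ θ i x)
    (hθ0 : ∀ i, ∀ x : ℤ, x ≤ 0 → θ i x = 0)
    (hθpos : ∀ i, ∀ j : ℤ, 1 ≤ j → 0 < θ i j)
    (hcb : complexBalanced m K y y' κ c)
    (d : Fin m → ℝ) (V : ℝ) (hV : 0 < V) :
    stationaryEq m K y y'
      (prodForm m (fun i => V ^ (d i) * c i) θ)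
      (genIntensity m K y
        (fun k => κ k / V ^ ((∑ i, d i * (y k i : ℝ)) - 1)) θ) := by
  intro x
  set cV : Fin m → ℝ := fun i => V ^ (d i) * c i with hcVdef
  set f : Fin K → ℝ := fun k => κ k * ∏ i, c i ^ y k i with hfdef
  -- coefficient computation
  have hcoef : ∀ k, κ k / V ^ ((∑ i, d i * (y k i : ℝ)) - 1) * ∏ i, cV i ^ y k i
      = V * f k := by
    intro k
    have hprod : (∏ i, cV i ^ y k i)
        = V ^ (∑ i, d i * (y k i : ℝ)) * ∏ i, c i ^ y k i := by
      rw [Real.rpow_sum_of_pos hV, ← Finset.prod_mul_distrib]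
      refine Finset.prod_congr rfl fun i _ => ?_
      rw [hcVdef]
      rw [mul_pow, ← Real.rpow_natCast (V ^ (d i)) (y k i), ← Real.rpow_mul hV.le]
    have hVs : V ^ ((∑ i, d i * (y k i : ℝ)) - 1)
        = V ^ (∑ i, d i * (y k i : ℝ)) / V := by
      rw [Real.rpow_sub hV, Real.rpow_one]
    have hne : V ^ (∑ i, d i * (y k i : ℝ)) ≠ 0 := (Real.rpow_pos_of_pos hV _).ne'
    rw [hprod, hVs, hfdef]
    field_simp
  -- per-term rewriting
  have hterm : ∀ k (w : Fin m → ℤ),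
      prodForm m cV θ w * genIntensity m K y
          (fun k => κ k / V ^ ((∑ i, d i * (y k i : ℝ)) - 1)) θ k w
        = V * f k * prodForm m cV θ (fun i => w i - y k i) := by
    intro k w
    rw [genIntensity]
    calc prodForm m cV θ w * (κ k / V ^ ((∑ i, d i * (y k i : ℝ)) - 1) *
          ∏ i, ∏ j ∈ Finset.range (y k i), θ i (w i - j))
        = κ k / V ^ ((∑ i, d i * (y k i : ℝ)) - 1) *
            (prodForm m cV θ w * ∏ i, ∏ j ∈ Finset.range (y k i), θ i (w i - j)) := by ring
      _ = κ k / V ^ ((∑ i, d i * (y k i : ℝ)) - 1) *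
            ((∏ i, cV i ^ y k i) * prodForm m cV θ (fun i => w i - y k i)) := by
            rw [key_lemma m cV θ hθ0 hθpos w (y k)]
      _ = (κ k / V ^ ((∑ i, d i * (y k i : ℝ)) - 1) * ∏ i, cV i ^ y k i) *
            prodForm m cV θ (fun i => w i - y k i) := by ring
      _ = _ := by rw [hcoef k]
  -- rewrite LHS and RHS
  have hL : ∀ k, prodForm m cV θ (fun i => (x i : ℤ) - y' k i + y k i) *
      genIntensity m K y (fun k => κ k / V ^ ((∑ i, d i * (y k i : ℝ)) - 1)) θ k
        (fun i => (x i : ℤ) - y' k i + y k i)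
      = V * f k * prodForm m cV θ (fun i => (x i : ℤ) - y' k i) := by
    intro k
    have he : (fun i => ((x i : ℤ) - y' k i + y k i) - (y k i : ℤ))
        = fun i => (x i : ℤ) - y' k i := funext fun i => by ring
    rw [hterm k, he]
  have hR : ∀ k, prodForm m cV θ (fun i => (x i : ℤ)) *
      genIntensity m K y (fun k => κ k / V ^ ((∑ i, d i * (y k i : ℝ)) - 1)) θ k
        (fun i => (x i : ℤ))
      = V * f k * prodForm m cV θ (fun i => (x i : ℤ) - y k i) := by
    intro k
    rw [hterm k]
  simp only [Finset.mul_sum]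
  rw [Finset.sum_congr rfl fun k _ => hL k, Finset.sum_congr rfl fun k _ => hR k]
  -- group by complexes
  set g : (Fin m → ℕ) → ℝ := fun z => prodForm m cV θ (fun i => (x i : ℤ) - z i) with hgdef
  have hgl : ∀ k, V * f k * prodForm m cV θ (fun i => (x i : ℤ) - y' k i)
      = V * (f k * g (y' k)) := fun k => by rw [hgdef]; ring
  have hgr : ∀ k, V * f k * prodForm m cV θ (fun i => (x i : ℤ) - y k i)
      = V * (f k * g (y k)) := fun k => by rw [hgdef]; ring
  rw [Finset.sum_congr rfl fun k _ => hgl k, Finset.sum_congr rfl fun k _ => hgr k,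
    ← Finset.mul_sum, ← Finset.mul_sum]
  congr 1
  classical
  set T : Finset (Fin m → ℕ) := Finset.univ.image y ∪ Finset.univ.image y' with hT
  have hmy : ∀ k ∈ (Finset.univ : Finset (Fin K)), y k ∈ T := fun k _ => by
    simp [hT]
  have hmy' : ∀ k ∈ (Finset.univ : Finset (Fin K)), y' k ∈ T := fun k _ => by
    simp [hT]
  rw [← Finset.sum_fiberwise_of_maps_to hmy' (fun k => f k * g (y' k)),
    ← Finset.sum_fiberwise_of_maps_to hmy (fun k => f k * g (y k))]
  refine Finset.sum_congr rfl fun z hz => ?_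
  have hz' : (∃ k, y k = z) ∨ (∃ k, y' k = z) := by
    simp only [hT, Finset.mem_union, Finset.mem_image, Finset.mem_univ, true_and] at hz
    exact hz
  have h1 : ∑ k ∈ Finset.univ.filter (fun k => y' k = z), f k * g (y' k)
      = (∑ k ∈ Finset.univ.filter (fun k => y' k = z), f k) * g z := by
    rw [Finset.sum_mul]
    exact Finset.sum_congr rfl fun k hk => by
      rw [(Finset.mem_filter.mp hk).2]
  have h2 : ∑ k ∈ Finset.univ.filter (fun k => y k = z), f k * g (y k)
      = (∑ k ∈ Finset.univ.filter (fun k => y k = z), f k) * g z := by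
    rw [Finset.sum_mul]
    exact Finset.sum_congr rfl fun k hk => by
      rw [(Finset.mem_filter.mp hk).2]
  rw [h1, h2, hcb z hz']
end

section
/- Suppose c ∈ ℝ^m_{>0} is a complex balanced equilibrium of a reaction network with rate constants κ_k. Let d, A ∈ ℝ^m_{>0}, set c̃_i = (c_i/A_i)^{1/d_i}, and define 𝒱 : ℝ^m_{>0} → ℝ by 𝒱(x) = ∑_{i=1}^m [ x_i (d_i ln x_i − ln c_i − d_i + ln A_i) + d_i (c_i/A_i)^{1/d_i} ]. Then: (1) 𝒱(c̃) = 0 and 𝒱(x) > 0 for every x ∈ ℝ^m_{>0} with x ≠ c̃; (2) for every x ∈ ℝ^m_{>0}, ∇𝒱(x)·f(x) = ∑_{k=1}^K κ_k (A x^d)^{y_k} ∑_{i=1}^m (d_i ln x_i − ln c_i + ln A_i)(y'_{ki} − y_{ki}) ≤ 0, where f(x) = ∑_k κ_k (A x^d)^{y_k}(y_k' − y_k) and (A x^d)^{y} = ∏_i (A_i x_i^{d_i})^{y_i}. Hence 𝒱 is a Lyapunov function for the system ẋ = f(x). -/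
open Finset Filter

lemma entropy_nonneg {a b : ℝ} (ha : 0 < a) (hb : 0 < b) :
    0 ≤ a * (Real.log a - Real.log b) - a + b := by
  have h1 : Real.log b - Real.log a ≤ b / a - 1 := by
    rw [← Real.log_div hb.ne' ha.ne']
    exact Real.log_le_sub_one_of_pos (div_pos hb ha)
  have h2 : a * (b / a - 1) = b - a := by field_simp
  nlinarith [mul_le_mul_of_nonneg_left h1 ha.le]

lemma entropy_pos {a b : ℝ} (ha : 0 < a) (hb : 0 < b) (hab : a ≠ b) :
    0 < a * (Real.log a - Real.log b) - a + b := by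
  have hba : b / a ≠ 1 := fun h => hab ((div_eq_one_iff_eq ha.ne').mp h).symm
  have h1 : Real.log b - Real.log a < b / a - 1 := by
    rw [← Real.log_div hb.ne' ha.ne']
    exact Real.log_lt_sub_one_of_pos (div_pos hb ha) hba
  have h2 : a * (b / a - 1) = b - a := by field_simp
  nlinarith [mul_lt_mul_of_pos_left h1 ha]

lemma balance_sum (m K : ℕ) (y y' : Fin K → Fin m → ℕ) (κ : Fin K → ℝ)
    (c : Fin m → ℝ)
    (hcb : ∀ z : Fin m → ℕ, ((∃ k, y k = z) ∨ (∃ k, y' k = z)) →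
      ∑ k ∈ Finset.univ.filter (fun k => y' k = z), κ k * ∏ i, c i ^ y k i =
      ∑ k ∈ Finset.univ.filter (fun k => y k = z), κ k * ∏ i, c i ^ y k i)
    (g : (Fin m → ℕ) → ℝ) :
    ∑ k : Fin K, κ k * (∏ i, c i ^ y k i) * g (y' k)
      = ∑ k : Fin K, κ k * (∏ i, c i ^ y k i) * g (y k) := by
  classical
  set T : Finset (Fin m → ℕ) := Finset.univ.image y ∪ Finset.univ.image y' with hT
  have hy : ∀ k : Fin K, y k ∈ T := fun k =>
    Finset.mem_union_left _ (Finset.mem_image_of_mem y (Finset.mem_univ k))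
  have hy' : ∀ k : Fin K, y' k ∈ T := fun k =>
    Finset.mem_union_right _ (Finset.mem_image_of_mem y' (Finset.mem_univ k))
  have e1 : ∑ k : Fin K, κ k * (∏ i, c i ^ y k i) * g (y' k)
      = ∑ z ∈ T, (∑ k ∈ Finset.univ.filter (fun k => y' k = z),
          κ k * ∏ i, c i ^ y k i) * g z := by
    rw [← Finset.sum_fiberwise_of_maps_to (fun k _ => hy' k)
      (fun k => κ k * (∏ i, c i ^ y k i) * g (y' k))]
    refine Finset.sum_congr rfl fun z _ => ?_
    rw [Finset.sum_mul]
    exact Finset.sum_congr rfl fun k hk => by rw [(Finset.mem_filter.mp hk).2]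
  have e2 : ∑ k : Fin K, κ k * (∏ i, c i ^ y k i) * g (y k)
      = ∑ z ∈ T, (∑ k ∈ Finset.univ.filter (fun k => y k = z),
          κ k * ∏ i, c i ^ y k i) * g z := by
    rw [← Finset.sum_fiberwise_of_maps_to (fun k _ => hy k)
      (fun k => κ k * (∏ i, c i ^ y k i) * g (y k))]
    refine Finset.sum_congr rfl fun z _ => ?_
    rw [Finset.sum_mul]
    exact Finset.sum_congr rfl fun k hk => by rw [(Finset.mem_filter.mp hk).2]
  rw [e1, e2]
  refine Finset.sum_congr rfl fun z hz => ?_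
  congr 1
  apply hcb
  rcases Finset.mem_union.mp hz with h | h
  · obtain ⟨k, -, hk⟩ := Finset.mem_image.mp h; exact Or.inl ⟨k, hk⟩
  · obtain ⟨k, -, hk⟩ := Finset.mem_image.mp h; exact Or.inr ⟨k, hk⟩
/-- (Lyapunov property.) If `c` is a complex balanced equilibrium,
`d, A ∈ ℝ^m_{>0}` and `c̃_i = (c_i/A_i)^{1/d_i}`, then
`𝒱(x) = ∑_i [x_i(d_i ln x_i - ln c_i - d_i + ln A_i) + d_i (c_i/A_i)^{1/d_i}]`
vanishes at `c̃`, is positive elsewhere on `ℝ^m_{>0}`, and satisfies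
`∇𝒱(x)·f(x) ≤ 0` for the generalized system `ẋ = ∑_k κ_k (A x^d)^{y_k}(y_k'-y_k)`. -/
theorem stmt14 (m K : ℕ) (y y' : Fin K → Fin m → ℕ) (κ : Fin K → ℝ)
    (c d A : Fin m → ℝ)
    (hyy' : ∀ k, y k ≠ y' k) (hκ : ∀ k, 0 < κ k) (hc : ∀ i, 0 < c i)
    (hd : ∀ i, 0 < d i) (hA : ∀ i, 0 < A i)
    (hcb : complexBalanced m K y y' κ c) :
    ((∑ i, (((c i / A i) ^ (1 / d i)) *
        (d i * Real.log ((c i / A i) ^ (1 / d i)) - Real.log (c i) - d i + Real.log (A i))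
        + d i * (c i / A i) ^ (1 / d i))) = 0 ∧
      ∀ x : Fin m → ℝ, (∀ i, 0 < x i) →
        x ≠ (fun i => (c i / A i) ^ (1 / d i)) →
        0 < ∑ i, (x i *
          (d i * Real.log (x i) - Real.log (c i) - d i + Real.log (A i))
          + d i * (c i / A i) ^ (1 / d i))) ∧
    ∀ x : Fin m → ℝ, (∀ i, 0 < x i) →
      ∑ k : Fin K, κ k * (∏ i, (A i * x i ^ (d i)) ^ y k i) *
        ∑ i, (d i * Real.log (x i) - Real.log (c i) + Real.log (A i)) *
          ((y' k i : ℝ) - (y k i : ℝ)) ≤ 0 := by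
  have hctpos : ∀ i, (0:ℝ) < (c i / A i) ^ (1 / d i) :=
    fun i => Real.rpow_pos_of_pos (div_pos (hc i) (hA i)) _
  have hdlog : ∀ i, d i * Real.log ((c i / A i) ^ (1 / d i))
      = Real.log (c i) - Real.log (A i) := by
    intro i
    rw [Real.log_rpow (div_pos (hc i) (hA i)), Real.log_div (hc i).ne' (hA i).ne',
      ← mul_assoc, mul_one_div_cancel (hd i).ne', one_mul]
  refine ⟨⟨?_, ?_⟩, ?_⟩
  · apply Finset.sum_eq_zero
    intro i _
    linear_combination ((c i / A i) ^ (1 / d i)) * (hdlog i)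
  · intro x hx hxc
    obtain ⟨i0, hi0⟩ := Function.ne_iff.mp hxc
    have hterm : ∀ i, x i * (d i * Real.log (x i) - Real.log (c i) - d i + Real.log (A i))
        + d i * (c i / A i) ^ (1 / d i)
        = d i * (x i * (Real.log (x i) - Real.log ((c i / A i) ^ (1 / d i)))
            - x i + (c i / A i) ^ (1 / d i)) := by
      intro i
      linear_combination (x i) * (hdlog i)
    apply Finset.sum_pos'
    · intro i _
      rw [hterm i]
      exact mul_nonneg (hd i).le (entropy_nonneg (hx i) (hctpos i))
    · exact ⟨i0, Finset.mem_univ _, by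
        rw [hterm i0]
        exact mul_pos (hd i0) (entropy_pos (hx i0) (hctpos i0) hi0)⟩
  · intro x hx
    classical
    set w : Fin m → ℝ := fun i => d i * Real.log (x i) - Real.log (c i) + Real.log (A i)
      with hw
    have hAx : ∀ i, A i * x i ^ (d i) = c i * Real.exp (w i) := by
      intro i
      rw [hw]
      simp only
      rw [show d i * Real.log (x i) - Real.log (c i) + Real.log (A i)
          = d i * Real.log (x i) + Real.log (A i) - Real.log (c i) by ring,
        Real.exp_sub, Real.exp_add, Real.exp_log (hc i), Real.exp_log (hA i),
        Real.rpow_def_of_pos (hx i), mul_comm (Real.log (x i)) (d i)]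
      field_simp [(hc i).ne']
    have hprod : ∀ z : Fin m → ℕ,
        ∏ i, (A i * x i ^ (d i)) ^ z i
          = (∏ i, c i ^ z i) * Real.exp (∑ i, (z i : ℝ) * w i) := by
      intro z
      rw [Real.exp_sum, ← Finset.prod_mul_distrib]
      refine Finset.prod_congr rfl fun i _ => ?_
      rw [hAx i, mul_pow, ← Real.exp_nat_mul]
    have hS : ∀ k, ∑ i, w i * (((y' k i : ℝ)) - (y k i : ℝ))
        = (∑ i, ((y' k i : ℝ)) * w i) - ∑ i, ((y k i : ℝ)) * w i := by
      intro k
      rw [← Finset.sum_sub_distrib]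
      exact Finset.sum_congr rfl fun i _ => by ring
    have hCpos : ∀ k, (0:ℝ) < ∏ i, c i ^ y k i :=
      fun k => Finset.prod_pos fun i _ => pow_pos (hc i) _
    calc ∑ k : Fin K, κ k * (∏ i, (A i * x i ^ (d i)) ^ y k i) *
          ∑ i, w i * ((y' k i : ℝ) - (y k i : ℝ))
        ≤ ∑ k : Fin K, κ k * (∏ i, c i ^ y k i) *
            (Real.exp (∑ i, ((y' k i : ℝ)) * w i) - Real.exp (∑ i, ((y k i : ℝ)) * w i)) := by
          refine Finset.sum_le_sum fun k _ => ?_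
          rw [hprod (y k), hS k]
          set S := ∑ i, ((y k i : ℝ)) * w i
          set S' := ∑ i, ((y' k i : ℝ)) * w i
          have hE : Real.exp S' = Real.exp S * Real.exp (S' - S) := by
            rw [← Real.exp_add]; congr 1; ring
          have hU : S' - S + 1 ≤ Real.exp (S' - S) := Real.add_one_le_exp _
          calc κ k * ((∏ i, c i ^ y k i) * Real.exp S) * (S' - S)
              ≤ κ k * ((∏ i, c i ^ y k i) * Real.exp S) * (Real.exp (S' - S) - 1) :=
                mul_le_mul_of_nonneg_left (by linarith)
                  (mul_pos (hκ k) (mul_pos (hCpos k) (Real.exp_pos S))).le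
            _ = κ k * (∏ i, c i ^ y k i) * (Real.exp S' - Real.exp S) := by
                rw [hE]; ring
      _ = (∑ k : Fin K, κ k * (∏ i, c i ^ y k i) * Real.exp (∑ i, ((y' k i : ℝ)) * w i))
            - ∑ k : Fin K, κ k * (∏ i, c i ^ y k i) * Real.exp (∑ i, ((y k i : ℝ)) * w i) := by
          rw [← Finset.sum_sub_distrib]
          exact Finset.sum_congr rfl fun k _ => by ring
      _ = 0 := by
          rw [sub_eq_zero]
          exact balance_sum m K y y' κ c hcb (fun z => Real.exp (∑ i, ((z i : ℝ)) * w i))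
end

section
/- Let d ∈ ℝ^m_{>0} and c ∈ ℝ^m_{>0}. Then for every V > 0 the sum S(V) = ∑_{x ∈ ℤ^m_{≥0}} ∏_{i=1}^m (V^{d_i} c_i)^{x_i}/(x_i!)^{d_i} is finite, and lim_{V→∞} (1/V) ln S(V) = ∑_{i=1}^m d_i c_i^{1/d_i}. -/
open Finset Filter

namespace Stmt15Aux

open Topology


lemma exp_eq_tsum (t : ℝ) : Real.exp t = ∑' n : ℕ, t ^ n / n.factorial := by
  rw [Real.exp_eq_exp_ℝ, NormedSpace.exp_eq_tsum_div]

/-- Tail trick: if `f` halves beyond `N`, then the tsum is controlled by an initial sum. -/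
lemma tsum_le_sum_add (f : ℕ → ℝ) (hf : Summable f) (h0 : ∀ n, 0 ≤ f n) (N : ℕ)
    (hhalf : ∀ n, N ≤ n → f (n + 1) ≤ f n / 2) :
    ∑' n, f n ≤ (∑ n ∈ Finset.range (N + 1), f n) + f N := by
  rw [← Summable.sum_add_tsum_nat_add (N + 1) hf]
  have key : ∀ k, f (k + (N + 1)) ≤ f N * (1 / 2) ^ (k + 1) := by
    intro k
    induction k with
    | zero =>
      simpa [div_eq_mul_inv] using hhalf N le_rfl
    | succ k ih =>
      have h1 : f (k + (N + 1) + 1) ≤ f (k + (N + 1)) / 2 := hhalf _ (by omega)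
      have : k + 1 + (N + 1) = k + (N + 1) + 1 := by omega
      rw [this]
      calc f (k + (N + 1) + 1) ≤ f (k + (N + 1)) / 2 := h1
        _ ≤ f N * (1 / 2) ^ (k + 1) / 2 := by linarith [ih]
        _ = f N * (1 / 2) ^ (k + 1 + 1) := by ring
  have hsum2 : Summable (fun k : ℕ => f N * (1 / 2) ^ (k + 1)) := by
    apply Summable.mul_left
    exact (summable_geometric_of_lt_one (by norm_num) (by norm_num)).comp_injective
      (add_left_injective 1) |>.congr (fun k => rfl)
  have h2 : ∑' k, f (k + (N + 1)) ≤ ∑' k, f N * (1 / 2) ^ (k + 1) := by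
    exact Summable.tsum_le_tsum key ((summable_nat_add_iff (N + 1)).2 hf) hsum2
  have h3 : ∑' k : ℕ, f N * (1 / 2) ^ (k + 1) = f N := by
    have : ∀ k : ℕ, f N * (1 / 2) ^ (k + 1) = (f N * (1 / 2)) * (1 / 2 : ℝ) ^ k := by
      intro k; ring
    rw [tsum_congr this, tsum_mul_left, tsum_geometric_of_lt_one (by norm_num) (by norm_num)]
    ring
  linarith [h2, h3.le, h3.ge]

/-- There is a term of the exponential series within a polynomial factor of `exp t`. -/
lemma exists_term_ge (t : ℝ) (ht : 0 ≤ t) :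
    ∃ n : ℕ, Real.exp t / (2 * t + 4) ≤ t ^ n / n.factorial := by
  set N : ℕ := ⌈2 * t⌉₊ + 1 with hN
  have hNt : 2 * t ≤ N := by
    have := Nat.le_ceil (2 * t)
    push_cast [hN]; linarith
  have hNt' : (N : ℝ) ≤ 2 * t + 2 := by
    have := Nat.ceil_lt_add_one (by linarith : (0:ℝ) ≤ 2 * t)
    push_cast [hN]; linarith
  have ha0 : ∀ n : ℕ, 0 ≤ t ^ n / n.factorial := fun n => by positivity
  have hhalf : ∀ n, N ≤ n → t ^ (n + 1) / (n + 1).factorial ≤ (t ^ n / n.factorial) / 2 := by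
    intro n hn
    have hfac : ((n + 1).factorial : ℝ) = (n + 1) * n.factorial := by
      push_cast [Nat.factorial_succ]; ring
    have hn1 : 2 * t ≤ (n : ℝ) + 1 := by
      have : (N : ℝ) ≤ n := by exact_mod_cast hn
      linarith
    have hfp : (0:ℝ) < n.factorial := by positivity
    have heq : t ^ (n+1) / ((n+1).factorial : ℝ) = (t / ((n:ℝ)+1)) * (t ^ n / n.factorial) := by
      rw [hfac, pow_succ]; field_simp
    rw [heq]
    have h12 : t / ((n:ℝ)+1) ≤ 1/2 := by
      rw [div_le_div_iff₀ (by positivity) (by norm_num)]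
      linarith
    have hb := mul_le_mul_of_nonneg_right h12 (ha0 n)
    linarith
  have key := tsum_le_sum_add (fun n => t ^ n / n.factorial)
    (Real.summable_pow_div_factorial t) ha0 N hhalf
  rw [← exp_eq_tsum] at key
  by_contra hcon
  push_neg at hcon
  set M := Real.exp t / (2 * t + 4) with hM
  have hMpos : 0 < M := by positivity
  have h1 : (∑ n ∈ Finset.range (N + 1), t ^ n / n.factorial) < (N + 1) * M := by
    calc (∑ n ∈ Finset.range (N + 1), t ^ n / n.factorial)
        < ∑ _n ∈ Finset.range (N + 1), M := by
          apply Finset.sum_lt_sum_of_nonempty (by simp)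
          intro n _
          exact hcon n
      _ = (N + 1) * M := by simp [mul_comm]
  have h2 : t ^ N / N.factorial < M := hcon N
  have hlt : Real.exp t < ((N : ℝ) + 2) * M := by
    push_cast at h1 ⊢
    linarith
  have hle : ((N : ℝ) + 2) * M ≤ (2 * t + 4) * M := by
    apply mul_le_mul_of_nonneg_right _ hMpos.le
    linarith
  have hfin : Real.exp t < (2 * t + 4) * M := lt_of_lt_of_le hlt hle
  rw [hM, mul_div_cancel₀ _ (by linarith : (2 * t + 4 : ℝ) ≠ 0)] at hfin
  exact lt_irrefl _ hfin
  


variable {d t : ℝ}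

lemma b_succ_eq (ht : 0 ≤ t) (hd : 0 ≤ d) (n : ℕ) :
    (t ^ (n+1) / ((n+1).factorial : ℝ)) ^ d
      = (t / ((n:ℝ)+1)) ^ d * (t ^ n / n.factorial : ℝ) ^ d := by
  rw [← Real.mul_rpow (by positivity) (by positivity)]
  congr 1
  have hfac : (((n+1).factorial : ℕ) : ℝ) = ((n:ℝ) + 1) * n.factorial := by
    push_cast [Nat.factorial_succ]; ring
  rw [hfac, pow_succ]
  have h1 : ((n:ℝ)+1) ≠ 0 := by positivity
  have h2 : ((n.factorial:ℝ)) ≠ 0 := by positivity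
  field_simp

lemma summable_b (hd : 0 < d) (ht : 0 < t) :
    Summable (fun n : ℕ => (t ^ n / n.factorial : ℝ) ^ d) := by
  apply summable_of_ratio_test_tendsto_lt_one (l := 0) one_pos
  · filter_upwards with n
    positivity
  · have h1 : Tendsto (fun n : ℕ => t / ((n:ℝ)+1)) atTop (𝓝 0) := by
      simpa [div_eq_mul_inv] using (tendsto_one_div_add_atTop_nhds_zero_nat).const_mul t
    have h2 : ContinuousAt (fun x : ℝ => x ^ d) 0 :=
      Real.continuousAt_rpow_const 0 d (Or.inr hd.le)
    have h3 : Tendsto (fun n : ℕ => (t / ((n:ℝ)+1)) ^ d) atTop (𝓝 ((0:ℝ) ^ d)) :=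
      (h2.tendsto).comp h1
    rw [Real.zero_rpow hd.ne'] at h3
    apply h3.congr
    intro n
    rw [b_succ_eq ht.le hd.le n]
    have hb : (0:ℝ) < (t ^ n / n.factorial : ℝ) ^ d := by positivity
    rw [Real.norm_eq_abs, Real.norm_eq_abs, abs_of_pos (by positivity), abs_of_pos hb,
      mul_div_assoc, div_self hb.ne', mul_one]

lemma term_le_exp (ht : 0 ≤ t) (n : ℕ) : t ^ n / (n.factorial : ℝ) ≤ Real.exp t := by
  rw [exp_eq_tsum]
  exact Summable.le_tsum (Real.summable_pow_div_factorial t) n (fun m _ => by positivity)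

lemma b_le (hd : 0 < d) (ht : 0 ≤ t) (n : ℕ) :
    (t ^ n / n.factorial : ℝ) ^ d ≤ Real.exp (d * t) := by
  rw [mul_comm, Real.exp_mul]
  exact Real.rpow_le_rpow (by positivity) (term_le_exp ht n) hd.le



variable {d t : ℝ}

lemma tsum_b_le (hd : 0 < d) (ht : 0 < t) :
    ∑' n : ℕ, (t ^ n / n.factorial : ℝ) ^ d ≤ (2 ^ (1/d) * t + 4) * Real.exp (d * t) := by
  have h2d : (0:ℝ) < 2 ^ (1/d) := Real.rpow_pos_of_pos two_pos _
  set N : ℕ := ⌈2 ^ (1/d) * t⌉₊ + 1 with hN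
  have hNt : 2 ^ (1/d) * t ≤ N := by
    have := Nat.le_ceil (2 ^ (1/d) * t)
    push_cast [hN]; linarith
  have hNt' : (N : ℝ) ≤ 2 ^ (1/d) * t + 2 := by
    have := Nat.ceil_lt_add_one (by positivity : (0:ℝ) ≤ 2 ^ (1/d) * t)
    push_cast [hN]; linarith
  have hhalf : ∀ n, N ≤ n →
      (t ^ (n+1) / ((n+1).factorial : ℝ)) ^ d ≤ ((t ^ n / n.factorial : ℝ) ^ d) / 2 := by
    intro n hn
    rw [b_succ_eq ht.le hd.le n]
    have hNn : (N:ℝ) ≤ n := by exact_mod_cast hn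
    have hratio : (t / ((n:ℝ)+1)) ^ d ≤ 1/2 := by
      have h1 : t / ((n:ℝ)+1) ≤ ((2:ℝ) ^ (1/d))⁻¹ := by
        rw [div_le_iff₀ (by positivity : (0:ℝ) < (n:ℝ)+1), inv_mul_eq_div, le_div_iff₀ h2d]
        nlinarith
      calc (t / ((n:ℝ)+1)) ^ d ≤ (((2:ℝ) ^ (1/d))⁻¹) ^ d :=
            Real.rpow_le_rpow (by positivity) h1 hd.le
        _ = 1/2 := by
            rw [← Real.inv_rpow (by positivity), one_div, Real.rpow_inv_rpow (by norm_num) hd.ne']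
            norm_num
    have hb : (0:ℝ) ≤ (t ^ n / n.factorial : ℝ) ^ d := by positivity
    calc (t / ((n:ℝ)+1)) ^ d * (t ^ n / n.factorial : ℝ) ^ d
        ≤ (1/2) * (t ^ n / n.factorial : ℝ) ^ d := mul_le_mul_of_nonneg_right hratio hb
      _ = ((t ^ n / n.factorial : ℝ) ^ d) / 2 := by ring
  have key := tsum_le_sum_add (fun n => (t ^ n / n.factorial : ℝ) ^ d)
    (summable_b hd ht) (fun n => by positivity) N hhalf
  have h1 : (∑ n ∈ Finset.range (N + 1), (t ^ n / n.factorial : ℝ) ^ d)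
      ≤ (N + 1) * Real.exp (d * t) := by
    calc (∑ n ∈ Finset.range (N + 1), (t ^ n / n.factorial : ℝ) ^ d)
        ≤ ∑ _n ∈ Finset.range (N + 1), Real.exp (d * t) :=
          Finset.sum_le_sum (fun n _ => b_le hd ht.le n)
      _ = (N + 1) * Real.exp (d * t) := by simp [mul_comm]
  have h2 := b_le hd ht.le N
  have hexp : (0:ℝ) < Real.exp (d * t) := Real.exp_pos _
  calc ∑' n : ℕ, (t ^ n / n.factorial : ℝ) ^ d
      ≤ (∑ n ∈ Finset.range (N + 1), (t ^ n / n.factorial : ℝ) ^ d)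
        + (t ^ N / N.factorial : ℝ) ^ d := key
    _ ≤ ((N:ℝ) + 2) * Real.exp (d * t) := by push_cast at h1 ⊢; linarith
    _ ≤ (2 ^ (1/d) * t + 4) * Real.exp (d * t) := by nlinarith [hexp]

lemma le_tsum_b (hd : 0 < d) (ht : 0 < t) :
    Real.exp (d * t) / (2 * t + 4) ^ d ≤ ∑' n : ℕ, (t ^ n / n.factorial : ℝ) ^ d := by
  obtain ⟨n, hn⟩ := exists_term_ge t ht.le
  have heq : Real.exp (d * t) / (2 * t + 4) ^ d = (Real.exp t / (2 * t + 4)) ^ d := by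
    rw [Real.div_rpow (Real.exp_pos t).le (by positivity), mul_comm d t, Real.exp_mul]
  rw [heq]
  refine le_trans (Real.rpow_le_rpow (by positivity) hn hd.le) ?_
  exact Summable.le_tsum (summable_b hd ht) n (fun m _ => by positivity)

lemma log_bounds (hd : 0 < d) (ht : 0 < t) :
    d * t - d * Real.log (2 * t + 4) ≤ Real.log (∑' n : ℕ, (t ^ n / n.factorial : ℝ) ^ d) ∧
    Real.log (∑' n : ℕ, (t ^ n / n.factorial : ℝ) ^ d) ≤ d * t + Real.log (2 ^ (1/d) * t + 4) := by
  have h2d : (0:ℝ) < 2 ^ (1/d) := Real.rpow_pos_of_pos two_pos _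
  have hlowpos : (0:ℝ) < Real.exp (d * t) / (2 * t + 4) ^ d := by positivity
  have hSpos : (0:ℝ) < ∑' n : ℕ, (t ^ n / n.factorial : ℝ) ^ d :=
    lt_of_lt_of_le hlowpos (le_tsum_b hd ht)
  constructor
  · have := Real.log_le_log hlowpos (le_tsum_b hd ht)
    rwa [Real.log_div (Real.exp_pos _).ne' (by positivity), Real.log_exp,
      Real.log_rpow (by linarith)] at this
  · have := Real.log_le_log hSpos (tsum_b_le hd ht)
    rwa [Real.log_mul (by positivity) (Real.exp_pos _).ne', Real.log_exp, add_comm] at this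



lemma tendsto_log_affine_div (a b : ℝ) (ha : 0 < a) (hb : 0 ≤ b) :
    Tendsto (fun V : ℝ => Real.log (a * V + b) / V) atTop (𝓝 0) := by
  have hlog : Tendsto (fun x : ℝ => Real.log x / x) atTop (𝓝 0) :=
    Real.isLittleO_log_id_atTop.tendsto_div_nhds_zero
  have hupper : Tendsto (fun V : ℝ => Real.log (a + b) / V + Real.log V / V) atTop (𝓝 0) := by
    have h1 : Tendsto (fun V : ℝ => Real.log (a + b) / V) atTop (𝓝 0) :=
      tendsto_const_nhds.div_atTop tendsto_id
    simpa using h1.add hlog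
  apply tendsto_of_tendsto_of_tendsto_of_le_of_le' tendsto_const_nhds hupper
  · filter_upwards [eventually_ge_atTop (max 1 (1/a))] with V hV
    have hV1 : (1:ℝ) ≤ V := le_trans (le_max_left _ _) hV
    have hVa : 1/a ≤ V := le_trans (le_max_right _ _) hV
    have h1 : (1:ℝ) ≤ a * V + b := by
      rw [div_le_iff₀ ha] at hVa
      nlinarith
    have := Real.log_nonneg h1
    positivity
  · filter_upwards [eventually_ge_atTop (1:ℝ)] with V hV1
    have hV0 : (0:ℝ) < V := lt_of_lt_of_le one_pos hV1
    have h1 : a * V + b ≤ (a + b) * V := by nlinarith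
    have h2 : Real.log (a * V + b) ≤ Real.log ((a + b) * V) :=
      Real.log_le_log (by nlinarith) h1
    rw [Real.log_mul (by positivity) (by positivity)] at h2
    rw [← add_div]
    exact div_le_div_of_nonneg_right h2 hV0.le
  


lemma coord_limit (d c' : ℝ) (hd : 0 < d) (hc : 0 < c') :
    Tendsto (fun V : ℝ =>
        (1/V) * Real.log (∑' n : ℕ, ((V * c') ^ n / n.factorial : ℝ) ^ d))
      atTop (𝓝 (d * c')) := by
  have h2d : (0:ℝ) < 2 ^ (1/d) := Real.rpow_pos_of_pos two_pos _
  have hlow : Tendsto (fun V : ℝ => d * c' - d * (Real.log (2 * c' * V + 4) / V))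
      atTop (𝓝 (d * c')) := by
    have := (tendsto_log_affine_div (2 * c') 4 (by positivity) (by norm_num)).const_mul d
    simpa using tendsto_const_nhds.sub this
  have hup : Tendsto (fun V : ℝ => d * c' + Real.log (2 ^ (1/d) * c' * V + 4) / V)
      atTop (𝓝 (d * c')) := by
    have := tendsto_log_affine_div (2 ^ (1/d) * c') 4 (by positivity) (by norm_num)
    simpa using tendsto_const_nhds.add this
  apply tendsto_of_tendsto_of_tendsto_of_le_of_le' hlow hup
  · filter_upwards [eventually_gt_atTop (0:ℝ)] with V hV
    have ht : 0 < V * c' := by positivity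
    have hb := (log_bounds hd ht).1
    have e1 : 2 * c' * V + 4 = 2 * (V * c') + 4 := by ring
    rw [e1]
    have h3 := mul_le_mul_of_nonneg_left hb (by positivity : (0:ℝ) ≤ 1/V)
    calc d * c' - d * (Real.log (2 * (V * c') + 4) / V)
        = (1/V) * (d * (V * c') - d * Real.log (2 * (V * c') + 4)) := by
          field_simp
      _ ≤ (1/V) * Real.log (∑' n : ℕ, ((V * c') ^ n / n.factorial : ℝ) ^ d) := h3
  · filter_upwards [eventually_gt_atTop (0:ℝ)] with V hV
    have ht : 0 < V * c' := by positivity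
    have hb := (log_bounds hd ht).2
    have e1 : 2 ^ (1/d) * c' * V + 4 = 2 ^ (1/d) * (V * c') + 4 := by ring
    rw [e1]
    have h3 := mul_le_mul_of_nonneg_left hb (by positivity : (0:ℝ) ≤ 1/V)
    calc (1/V) * Real.log (∑' n : ℕ, ((V * c') ^ n / n.factorial : ℝ) ^ d)
        ≤ (1/V) * (d * (V * c') + Real.log (2 ^ (1/d) * (V * c') + 4)) := h3
      _ = d * c' + Real.log (2 ^ (1/d) * (V * c') + 4) / V := by field_simp

lemma hasSum_pi_prod {m : ℕ} (g : Fin m → ℕ → ℝ) (h0 : ∀ i n, 0 ≤ g i n)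
    (hs : ∀ i, Summable (g i)) :
    HasSum (fun x : Fin m → ℕ => ∏ i, g i (x i)) (∏ i, ∑' n, g i n) := by
  induction m with
  | zero =>
    simp only [Finset.univ_eq_empty, Finset.prod_empty]
    convert hasSum_single (f := fun _ : Fin 0 → ℕ => (1:ℝ)) default ?_
    · intro b hb
      exact absurd (Subsingleton.elim b default) hb
  | succ m ih =>
    have key : HasSum (fun p : ℕ × (Fin m → ℕ) =>
        g 0 p.1 * ∏ i : Fin m, g i.succ (p.2 i))
        ((∑' n, g 0 n) * ∏ i : Fin m, ∑' n, g i.succ n) := by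
      apply (hs 0).hasSum.mul (ih (fun i => g i.succ) (fun i n => h0 _ _) (fun i => hs _))
      apply Summable.mul_of_nonneg (hs 0)
        (ih (fun i => g i.succ) (fun i n => h0 _ _) (fun i => hs _)).summable
        (fun n => h0 _ _)
      intro x
      exact Finset.prod_nonneg (fun i _ => h0 _ _)
    rw [← Equiv.hasSum_iff (Fin.consEquiv (fun _ : Fin (m+1) => ℕ))]
    have heq : ((fun x : Fin (m+1) → ℕ => ∏ i, g i (x i))
        ∘ (Fin.consEquiv fun _ : Fin (m+1) => ℕ)) =
        fun p : ℕ × (Fin m → ℕ) => g 0 p.1 * ∏ i : Fin m, g i.succ (p.2 i) := by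
      funext p
      simp [Fin.consEquiv, Fin.prod_univ_succ]
    rw [heq, Fin.prod_univ_succ]
    exact key



lemma term_eq (d c V : ℝ) (hd : 0 < d) (hc : 0 < c) (hV : 0 < V) (n : ℕ) :
    (V ^ d * c) ^ n / (n.factorial : ℝ) ^ d
      = ((V * c ^ (1/d)) ^ n / n.factorial) ^ d := by
  have hC : (0:ℝ) < V ^ d * c := by positivity
  have key : V * c ^ (1/d) = (V ^ d * c) ^ (1/d) := by
    rw [Real.mul_rpow (by positivity) hc.le, one_div, Real.rpow_rpow_inv hV.le hd.ne']
  rw [key, Real.div_rpow (by positivity) (Nat.cast_nonneg _)]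
  congr 1
  rw [← Real.rpow_natCast ((V ^ d * c) ^ (1/d)) n, ← Real.rpow_mul hC.le,
    ← Real.rpow_mul hC.le]
  rw [show 1/d * n * d = (n:ℝ) by field_simp]
  exact (Real.rpow_natCast _ n).symm


end Stmt15Aux

open Stmt15Aux in
/-- For `d, c ∈ ℝ^m_{>0}` and `V > 0`, the sum
`S(V) = ∑_{x ∈ ℤ^m_{≥0}} ∏_i (V^{d_i} c_i)^{x_i}/(x_i!)^{d_i}` is finite, and
`(1/V) ln S(V) → ∑_i d_i c_i^{1/d_i}` as `V → ∞`. -/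
theorem stmt15 (m : ℕ) (d c : Fin m → ℝ) (hd : ∀ i, 0 < d i) (hc : ∀ i, 0 < c i) :
    (∀ V : ℝ, 0 < V → Summable (fun x : Fin m → ℕ =>
      ∏ i, (V ^ (d i) * c i) ^ (x i) / ((x i).factorial : ℝ) ^ (d i))) ∧
    Filter.Tendsto
      (fun V : ℝ => (1 / V) * Real.log
        (∑' x : Fin m → ℕ, ∏ i, (V ^ (d i) * c i) ^ (x i) / ((x i).factorial : ℝ) ^ (d i)))
      Filter.atTop (nhds (∑ i, d i * c i ^ (1 / d i))) := by
  -- the rewritten per-coordinate summand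
  have hc' : ∀ i, 0 < (c i) ^ (1 / d i) := fun i => Real.rpow_pos_of_pos (hc i) _
  have hsum : ∀ V : ℝ, 0 < V → ∀ i, Summable
      (fun n : ℕ => (V ^ (d i) * c i) ^ n / ((n.factorial : ℝ)) ^ (d i)) := by
    intro V hV i
    have := summable_b (d := d i) (t := V * (c i) ^ (1 / d i)) (hd i) (mul_pos hV (Real.rpow_pos_of_pos (hc i) _))
    exact this.congr fun n => (term_eq (d i) (c i) V (hd i) (hc i) hV n).symm
  have hkey : ∀ V : ℝ, 0 < V → HasSum
      (fun x : Fin m → ℕ => ∏ i, (V ^ (d i) * c i) ^ (x i) / ((x i).factorial : ℝ) ^ (d i))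
      (∏ i, ∑' n : ℕ, (V ^ (d i) * c i) ^ n / ((n.factorial : ℝ)) ^ (d i)) := by
    intro V hV
    exact hasSum_pi_prod (fun i n => (V ^ (d i) * c i) ^ n / ((n.factorial : ℝ)) ^ (d i)) (fun i n => div_nonneg (pow_nonneg (mul_nonneg
      (Real.rpow_nonneg hV.le _) (hc i).le) _) (Real.rpow_nonneg (Nat.cast_nonneg _) _))
      (hsum V hV)
  refine ⟨fun V hV => (hkey V hV).summable, ?_⟩
  have hEq : ∀ᶠ V : ℝ in atTop,
      (1 / V) * Real.log
        (∑' x : Fin m → ℕ, ∏ i, (V ^ (d i) * c i) ^ (x i) / ((x i).factorial : ℝ) ^ (d i))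
      = ∑ i, (1 / V) * Real.log
          (∑' n : ℕ, ((V * (c i) ^ (1 / d i)) ^ n / n.factorial : ℝ) ^ (d i)) := by
    filter_upwards [eventually_gt_atTop (0:ℝ)] with V hV
    rw [(hkey V hV).tsum_eq]
    have hSone : ∀ i, (∑' n : ℕ, (V ^ (d i) * c i) ^ n / ((n.factorial : ℝ)) ^ (d i))
        = ∑' n : ℕ, ((V * (c i) ^ (1 / d i)) ^ n / n.factorial : ℝ) ^ (d i) := by
      intro i
      exact tsum_congr fun n => term_eq (d i) (c i) V (hd i) (hc i) hV n
    have hpos : ∀ i : Fin m,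
        (0:ℝ) < ∑' n : ℕ, ((V * (c i) ^ (1 / d i)) ^ n / n.factorial : ℝ) ^ (d i) := by
      intro i
      have ht : 0 < V * (c i) ^ (1 / d i) := mul_pos hV (Real.rpow_pos_of_pos (hc i) _)
      refine lt_of_lt_of_le ?_ (le_tsum_b (hd i) ht)
      apply div_pos (Real.exp_pos _)
      exact Real.rpow_pos_of_pos (by linarith) _
    rw [Finset.prod_congr rfl (fun i _ => hSone i)]
    rw [Real.log_prod (fun i _ => (hpos i).ne')]
    rw [Finset.mul_sum]
  refine Tendsto.congr' (hEq.mono fun _ h => h.symm) ?_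
  apply tendsto_finset_sum
  intro i _
  exact coord_limit (d i) ((c i) ^ (1 / d i)) (hd i) (hc' i)
end
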